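/- arXiv:1202.5523 — 4 statements merged into one kernel-verified Lean document; each statement's English description precedes it below -/
import Mathlib

section
/- Path-sum formula for walks: let G be a finite quiver with vertex set V and let α, ω ∈ V. Then, in the ring ℚ[[z]] of formal power series, the generating function Σ_{n≥0} c_n z^n, where c_n is the number of walks of length n from α to ω on G, equals Σ_π z^p · Π_{i=0}^{p} F_{V∖{σ0,…,σ(i−1)}}(σi), the sum running over all simple paths π = (σ0 σ1 ⋯ σp) of G with σ0 = α and σp = ω (for α = ω the only such π is the trivial path, of length p = 0). -/
set_option linter.unusedSectionVars false
set_option linter.unusedVariables false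
open PowerSeries


/-- The number of walks of length `n` from `α` to `ω` on the quiver with edge
relation `E`: walks are recorded by their vertex sequences, lists of `n + 1`
vertices starting at `α`, ending at `ω`, with consecutive vertices joined by edges. -/
noncomputable def nWalks {V : Type} (E : V → V → Prop) (n : ℕ) (α ω : V) : ℕ :=
  Nat.card {L : List V // L.length = n + 1 ∧ L.head? = some α ∧
    L.getLast? = some ω ∧ L.Chain' E}

/-- Given a family `F` of dressed-vertex series, `dressProd F T [σ₀, …, σₖ]` is the
product `F T σ₀ · F (T ∖ {σ₀}) σ₁ ⋯ F (T ∖ {σ₀, …, σ_{k-1}}) σₖ`. -/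
noncomputable def dressProd {V : Type} [DecidableEq V]
    (F : Finset V → V → PowerSeries ℚ) : Finset V → List V → PowerSeries ℚ
  | _, [] => 1
  | T, v :: r => F T v * dressProd F (T.erase v) r

/-- Fuel-graded version of the dressed-vertex series `F_S(α)`:
`F_S(α) = (1 − Σ_γ z^m · F_{S∖{α}}(μ₂) ⋯ F_{S∖{α,μ₂,…,μ_{m-1}}}(μ_m))⁻¹`,
the sum running over all nontrivial simple cycles `γ = (α μ₂ ⋯ μ_m α)` of the
induced subquiver `G[S]`, recorded by their lists `[μ₂, …, μ_m]` of internal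
vertices (of length `m − 1`). -/
noncomputable def dressFAux {V : Type} [DecidableEq V] (E : V → V → Prop) :
    ℕ → Finset V → V → PowerSeries ℚ
  | 0, _, _ => 1
  | n + 1, S, α =>
      (1 - ∑ᶠ c ∈ {c : List V | c.Nodup ∧ α ∉ c ∧ (∀ v ∈ c, v ∈ S) ∧
            List.Chain E α (c ++ [α])},
          (PowerSeries.X : PowerSeries ℚ) ^ (c.length + 1) *
            dressProd (dressFAux E n) (S.erase α) c)⁻¹

/-- The dressed-vertex series `F_S(α)` of the vertex `α` on the induced subquiver
`G[S]`.  (The fuel `S.card` is enough for the recursion to unfold completely.) -/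
noncomputable def dressF {V : Type} [DecidableEq V] (E : V → V → Prop)
    (S : Finset V) (α : V) : PowerSeries ℚ :=
  dressFAux E S.card S α


section ListLemmas
variable {X : Type*} {R : X → X → Prop}

/-- Chain with an appended endpoint. -/
lemma chain_concat_iff (a b : X) : ∀ (l : List X),
    List.Chain R a (l ++ [b]) ↔ List.Chain R a l ∧ R (l.getLastD a) b
  | [] => by simp [List.Chain]
  | c :: l => by
    have ih := chain_concat_iff c b l
    simp only [List.Chain] at ih ⊢
    simp only [List.cons_append, List.chain_cons, ih,
      List.getLastD_cons, List.chain_cons]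
    tauto

lemma getLastD_append_cons (d b : X) : ∀ (l₁ l₂ : List X),
    (l₁ ++ b :: l₂).getLastD d = l₂.getLastD b
  | [], l₂ => by rw [List.nil_append, List.getLastD_cons]
  | c :: l₁, l₂ => by
    simp only [List.cons_append, List.getLastD_cons]
    exact getLastD_append_cons c b l₁ l₂

lemma takeWhile_append_of (p : X → Bool) (b : X) (hb : ¬ p b) : ∀ (l₁ l₂ : List X),
    (∀ x ∈ l₁, p x) → (l₁ ++ b :: l₂).takeWhile p = l₁
  | [], l₂, _ => by simp [List.takeWhile_cons, hb]
  | c :: l₁, l₂, h => by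
    have hc : p c := h c (by simp)
    simp only [List.cons_append, List.takeWhile_cons, hc, if_true]
    rw [takeWhile_append_of p b hb l₁ l₂ (fun x hx => h x (by simp [hx]))]

lemma dropWhile_append_of (p : X → Bool) (b : X) (hb : ¬ p b) : ∀ (l₁ l₂ : List X),
    (∀ x ∈ l₁, p x) → (l₁ ++ b :: l₂).dropWhile p = b :: l₂
  | [], l₂, _ => by simp [List.dropWhile_cons, hb]
  | c :: l₁, l₂, h => by
    have hc : p c := h c (by simp)
    simp only [List.cons_append, List.dropWhile_cons, hc, if_true]
    exact dropWhile_append_of p b hb l₁ l₂ (fun x hx => h x (by simp [hx]))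

lemma getLastD_mem_cons' (l : List X) (a : X) : l.getLastD a ∈ a :: l := by
  cases l with
  | nil => simp
  | cons c l =>
    rw [List.getLastD_cons]
    exact List.mem_cons_of_mem a (List.getLastD_mem_cons (l := l) (a := c))

end ListLemmas


section CardLemmas

lemma nat_card_sigma {ι : Type*} [Fintype ι] (f : ι → Type*) [∀ i, Finite (f i)] :
    Nat.card (Σ i, f i) = ∑ i, Nat.card (f i) := by
  letI := fun i => Fintype.ofFinite (f i)
  simp [Nat.card_eq_fintype_card, Fintype.card_sigma]

lemma nat_card_split {X : Type*} (P R : X → Prop) [h : Finite {x // P x}] :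
    Nat.card {x // P x} = Nat.card {x : X // P x ∧ R x} + Nat.card {x : X // P x ∧ ¬ R x} := by
  classical
  haveI h1 : Finite {x : X // P x ∧ R x} := Finite.of_injective
    (fun a => (⟨a.1, a.2.1⟩ : {x // P x}))
    (by intro a b hab; apply Subtype.ext; exact Subtype.mk_eq_mk.mp hab)
  haveI h2 : Finite {x : X // P x ∧ ¬ R x} := Finite.of_injective
    (fun a => (⟨a.1, a.2.1⟩ : {x // P x}))
    (by intro a b hab; apply Subtype.ext; exact Subtype.mk_eq_mk.mp hab)
  have e : {x // P x} ≃ {x : X // P x ∧ R x} ⊕ {x : X // P x ∧ ¬ R x} :=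
    { toFun := fun x => if h : R x.1 then Sum.inl ⟨x.1, x.2, h⟩ else Sum.inr ⟨x.1, x.2, h⟩
      invFun := fun y => y.elim (fun a => ⟨a.1, a.2.1⟩) (fun a => ⟨a.1, a.2.1⟩)
      left_inv := fun x => by by_cases h : R x.1 <;> simp [h]
      right_inv := fun y => by
        rcases y with a | a
        · simp [a.2.2]
        · simp [a.2.2] }
  rw [Nat.card_congr e, Nat.card_sum]

lemma nat_card_fiber {X ι : Type*} [Fintype ι] (P : X → Prop) [Finite {x // P x}] (f : X → ι) :
    Nat.card {x // P x} = ∑ i, Nat.card {x // P x ∧ f x = i} := by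
  haveI : ∀ i, Finite {x // P x ∧ f x = i} := fun i => Finite.of_injective
    (fun a => (⟨a.1, a.2.1⟩ : {x // P x}))
    (by intro a b hab; apply Subtype.ext; exact Subtype.mk_eq_mk.mp hab)
  rw [← nat_card_sigma]
  exact Nat.card_congr
    { toFun := fun x => ⟨f x.1, x.1, x.2, rfl⟩
      invFun := fun y => ⟨y.2.1, y.2.2.1⟩
      left_inv := fun x => rfl
      right_inv := fun y => by
        rcases y with ⟨i, x, hx, rfl⟩; rfl }

lemma nat_card_nest {X : Type*} (P Q : X → Prop) :
    Nat.card {a : {x // P x} // Q a.1} = Nat.card {x : X // P x ∧ Q x} :=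
  Nat.card_congr (Equiv.subtypeSubtypeEquivSubtypeInter P Q)

lemma finite_le_of_graded {A : Type*} (g : A → ℕ) [h : ∀ n, Finite {a : A // g a = n}] :
    ∀ n, Finite {a : A // g a ≤ n}
  | 0 => Finite.of_equiv {a : A // g a = 0}
      (Equiv.subtypeEquivRight (fun a => by omega))
  | n + 1 => by
    haveI := finite_le_of_graded g n
    exact Finite.of_injective
      (fun a : {a : A // g a ≤ n + 1} =>
        if hc : g a.1 ≤ n then (Sum.inl ⟨a.1, hc⟩ : {a : A // g a ≤ n} ⊕ {a : A // g a = n + 1})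
        else Sum.inr ⟨a.1, by omega⟩)
      (by
        intro a b hab
        by_cases ha : g a.1 ≤ n <;> by_cases hb : g b.1 ≤ n <;>
          simp only [ha, hb, dif_pos, dif_neg, not_false_iff] at hab <;>
          first
            | (apply Subtype.ext; exact Subtype.mk_eq_mk.mp (Sum.inl.inj hab))
            | (apply Subtype.ext; exact Subtype.mk_eq_mk.mp (Sum.inr.inj hab))
            | exact absurd hab (by simp))

lemma mk_card_mul {A B C : Type*} (gA : A → ℕ) (gB : B → ℕ) (gC : C → ℕ)
    [hA : ∀ n, Finite {a : A // gA a = n}] [hB : ∀ n, Finite {b : B // gB b = n}]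
    (e : C ≃ A × B) (he : ∀ c, gC c = gA (e c).1 + gB (e c).2) :
    (PowerSeries.mk fun n => (Nat.card {c : C // gC c = n} : ℚ)) =
      (PowerSeries.mk fun n => (Nat.card {a : A // gA a = n} : ℚ)) *
        (PowerSeries.mk fun n => (Nat.card {b : B // gB b = n} : ℚ)) := by
  ext n
  rw [PowerSeries.coeff_mk, PowerSeries.coeff_mul]
  have e1 : {c : C // gC c = n} ≃ {p : A × B // gA p.1 + gB p.2 = n} :=
    e.subtypeEquiv (fun c => by rw [he c])
  haveI hAle := finite_le_of_graded gA n
  haveI hBle := finite_le_of_graded gB n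
  haveI : Finite {p : A × B // gA p.1 + gB p.2 = n} :=
    Finite.of_injective
      (fun p : {p : A × B // gA p.1 + gB p.2 = n} =>
        ((⟨p.1.1, by have := p.2; omega⟩, ⟨p.1.2, by have := p.2; omega⟩) :
          {a : A // gA a ≤ n} × {b : B // gB b ≤ n}))
      (by
        intro p q hpq
        obtain ⟨h1, h2⟩ := Prod.mk.injEq .. ▸ hpq
        apply Subtype.ext
        exact Prod.ext (Subtype.mk_eq_mk.mp h1) (Subtype.mk_eq_mk.mp h2))
  rw [Nat.card_congr e1,
    nat_card_fiber (fun p : A × B => gA p.1 + gB p.2 = n)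
      (fun p => (⟨min (gA p.1) n, by omega⟩ : Fin (n + 1)))]
  have key : ∀ i : Fin (n + 1),
      Nat.card {p : A × B // (gA p.1 + gB p.2 = n) ∧
          (⟨min (gA p.1) n, by omega⟩ : Fin (n + 1)) = i} =
        Nat.card {a : A // gA a = i.1} * Nat.card {b : B // gB b = n - i.1} := by
    intro i
    have hi : i.1 ≤ n := by omega
    rw [← Nat.card_prod]
    rw [Nat.card_congr (Equiv.subtypeEquivRight
      (fun p => show _ ↔ (gA p.1 + gB p.2 = n) ∧ min (gA p.1) n = i.1 by
        rw [and_congr_right_iff]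
        intro _
        rw [Fin.ext_iff]))]
    refine Nat.card_congr
      { toFun := fun p => (⟨p.1.1, by have := p.2; omega⟩, ⟨p.1.2, by have := p.2; omega⟩)
        invFun := fun q => ⟨(q.1.1, q.2.1), by
          have h1 := q.1.2; have h2 := q.2.2; dsimp only; omega⟩
        left_inv := fun p => rfl
        right_inv := fun q => rfl }
  rw [Finset.Nat.sum_antidiagonal_eq_sum_range_succ
      (fun k m => (PowerSeries.coeff k) (PowerSeries.mk fun j => (Nat.card {a : A // gA a = j} : ℚ)) *
        (PowerSeries.coeff m) (PowerSeries.mk fun j => (Nat.card {b : B // gB b = j} : ℚ)))]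
  rw [← Fin.sum_univ_eq_sum_range]
  push_cast
  refine Finset.sum_congr rfl fun i _ => ?_
  rw [key i]
  push_cast
  simp [PowerSeries.coeff_mk]

lemma mk_card_shift {A : Type*} (g : A → ℕ) :
    (PowerSeries.mk fun n => (Nat.card {a : A // g a + 1 = n} : ℚ)) =
      X * PowerSeries.mk fun n => (Nat.card {a : A // g a = n} : ℚ) := by
  ext n
  cases n with
  | zero =>
    haveI : IsEmpty {a : A // g a + 1 = 0} := ⟨fun a => Nat.succ_ne_zero _ a.2⟩
    rw [PowerSeries.coeff_mk, PowerSeries.coeff_zero_eq_constantCoeff, map_mul,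
      constantCoeff_X, zero_mul, Nat.card_of_isEmpty, Nat.cast_zero]
  | succ m =>
    rw [PowerSeries.coeff_mk, PowerSeries.coeff_succ_X_mul, PowerSeries.coeff_mk,
      Nat.card_congr (Equiv.subtypeEquivRight fun a => ⟨fun h => Nat.succ_injective h, fun h => by rw [h]⟩)]

end CardLemmas


section Walks

open PowerSeries

variable {V : Type} [Fintype V] [DecidableEq V] (E : V → V → Prop)

/-- Walk from `α` to `ω` recorded by its tail: the list of vertices after `α`. -/
def IsWalkT (S : Finset V) (α ω : V) (c : List V) : Prop :=
  (∀ v ∈ c, v ∈ S) ∧ List.Chain E α c ∧ c.getLastD α = ω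

/-- Generating function of walks from `α` to `ω` inside `S`. -/
noncomputable def Wgf (S : Finset V) (α ω : V) : PowerSeries ℚ :=
  PowerSeries.mk fun n => (Nat.card {c : List V // c.length = n ∧ IsWalkT E S α ω c} : ℚ)

lemma finite_len (P : List V → Prop) (n : ℕ) :
    Finite {c : List V // c.length = n ∧ P c} := by
  have h : {c : List V | c.length = n ∧ P c}.Finite :=
    (List.finite_length_eq V n).subset (fun c hc => hc.1)
  exact h.to_subtype

lemma finite_len_nest (P : List V → Prop) (n : ℕ) :
    Finite {a : {c : List V // P c} // a.1.length = n} := by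
  haveI := finite_len P n
  exact Finite.of_injective
    (fun a => (⟨a.1.1, a.2, a.1.2⟩ : {c : List V // c.length = n ∧ P c}))
    (by intro a b hab; apply Subtype.ext; apply Subtype.ext
        exact Subtype.mk_eq_mk.mp hab)

lemma finite_len_nest' (P : List V → Prop) (n : ℕ) :
    Finite {a : {c : List V // P c} // a.1.length + 1 = n} := by
  haveI := finite_len_nest P (n - 1)
  exact Finite.of_injective
    (fun a => (⟨a.1, by have := a.2; omega⟩ :
      {a : {c : List V // P c} // a.1.length = n - 1}))
    (by intro a b hab; apply Subtype.ext; exact Subtype.mk_eq_mk.mp hab)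

/-- The set of (internal-vertex lists of) simple cycles off `α` in `G[S]`. -/
def cycSet (S : Finset V) (α : V) : Set (List V) :=
  {c : List V | c.Nodup ∧ α ∉ c ∧ (∀ v ∈ c, v ∈ S) ∧ List.Chain E α (c ++ [α])}

/-- The set of simple paths from `α` to `ω` in `G[S]`. -/
def pathSet (S : Finset V) (α ω : V) : Set (List V) :=
  {L : List V | L.Nodup ∧ L.head? = some α ∧ L.getLast? = some ω ∧ L.Chain' E ∧
    ∀ v ∈ L, v ∈ S}

lemma cycSet_finite (S : Finset V) (α : V) : (cycSet E S α).Finite :=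
  (List.finite_length_le V (Fintype.card V)).subset fun c hc => hc.1.length_le_card

lemma pathSet_finite (S : Finset V) (α ω : V) : (pathSet E S α ω).Finite :=
  (List.finite_length_le V (Fintype.card V)).subset fun c hc => hc.1.length_le_card

lemma dressFAux_succ (n : ℕ) (S : Finset V) (α : V) :
    dressFAux E (n + 1) S α =
      (1 - ∑ᶠ c ∈ cycSet E S α,
        (PowerSeries.X : PowerSeries ℚ) ^ (c.length + 1) *
          dressProd (dressFAux E n) (S.erase α) c)⁻¹ := by
  rw [dressFAux, cycSet]

lemma dressFAux_eq_dressF :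
    ∀ n (S : Finset V) (α : V), α ∈ S → S.card ≤ n → dressFAux E n S α = dressF E S α := by
  intro n
  induction n using Nat.strong_induction_on with
  | _ n ih =>
    have hprod : ∀ j, j < n → ∀ (c : List V) (T : Finset V), c.Nodup →
        (∀ v ∈ c, v ∈ T) → T.card ≤ j →
        dressProd (dressFAux E j) T c = dressProd (dressF E) T c := by
      intro j hj c
      induction c with
      | nil => intro T _ _ _; rfl
      | cons v r ihc =>
        intro T hnd hmem hcard
        rw [dressProd, dressProd, ih j hj T v (hmem v (by simp)) hcard,
          ihc (T.erase v) hnd.of_cons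
            (fun w hw => Finset.mem_erase.mpr
              ⟨fun hwv => (List.nodup_cons.mp hnd).1 (hwv ▸ hw), hmem w (by simp [hw])⟩)
            (le_trans (Finset.card_erase_le) hcard)]
    intro S α hα hcard
    have hcpos : 0 < S.card := Finset.card_pos.mpr ⟨α, hα⟩
    obtain ⟨m, rfl⟩ : ∃ m, n = m + 1 := ⟨n - 1, by omega⟩
    set k := (S.erase α).card with hkdef
    have hk : S.card = k + 1 := (Finset.card_erase_add_one hα).symm
    have hkm : k ≤ m := by omega
    rw [dressF, hk, dressFAux_succ, dressFAux_succ]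
    congr 2
    refine finsum_mem_congr rfl (fun c hc => ?_)
    rw [hprod m (by omega) c (S.erase α) hc.1
        (fun v hv => Finset.mem_erase.mpr ⟨fun hvα => hc.2.1 (hvα ▸ hv), hc.2.2.1 v hv⟩)
        hkm,
      hprod k (by omega) c (S.erase α) hc.1
        (fun v hv => Finset.mem_erase.mpr ⟨fun hvα => hc.2.1 (hvα ▸ hv), hc.2.2.1 v hv⟩)
        le_rfl]

lemma dressProd_fuel (j : ℕ) (c : List V) (T : Finset V) (hnd : c.Nodup)
    (hmem : ∀ v ∈ c, v ∈ T) (hcard : T.card ≤ j) :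
    dressProd (dressFAux E j) T c = dressProd (dressF E) T c := by
  induction c generalizing T with
  | nil => rfl
  | cons v r ihc =>
    rw [dressProd, dressProd, dressFAux_eq_dressF E j T v (hmem v (by simp)) hcard,
      ihc (T.erase v) hnd.of_cons
        (fun w hw => Finset.mem_erase.mpr
          ⟨fun hwv => (List.nodup_cons.mp hnd).1 (hwv ▸ hw), hmem w (by simp [hw])⟩)
        (le_trans (Finset.card_erase_le) hcard)]

/-- Unfolding of the dressed-vertex series with `dressF` on the inside. -/
lemma dressF_eq (S : Finset V) (α : V) (hα : α ∈ S) :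
    dressF E S α =
      (1 - ∑ᶠ c ∈ cycSet E S α,
        (PowerSeries.X : PowerSeries ℚ) ^ (c.length + 1) *
          dressProd (dressF E) (S.erase α) c)⁻¹ := by
  have hcpos : 0 < S.card := Finset.card_pos.mpr ⟨α, hα⟩
  obtain ⟨k, hk⟩ : ∃ k, S.card = k + 1 := ⟨S.card - 1, by omega⟩
  rw [dressF, hk, dressFAux_succ]
  congr 2
  refine finsum_mem_congr rfl (fun c hc => ?_)
  rw [dressProd_fuel E k c (S.erase α) hc.1
      (fun v hv => Finset.mem_erase.mpr ⟨fun hvα => hc.2.1 (hvα ▸ hv), hc.2.2.1 v hv⟩)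
      (by have := Finset.card_erase_add_one hα; omega)]

end Walks



section Decomp

open PowerSeries

variable {V : Type} [Fintype V] [DecidableEq V] (E : V → V → Prop)

/-- `pne α v` holds when `v ≠ α`. -/
def pne (α : V) : V → Bool := fun v => decide (v ≠ α)

lemma dropWhile_ne_nil_of_mem {α : V} {c : List V} (hm : α ∈ c) :
    c.dropWhile (pne α) ≠ [] := by
  intro h
  have hc : c.takeWhile (pne α) = c := by
    have h2 := List.takeWhile_append_dropWhile (p := pne α) (l := c)
    rw [h, List.append_nil] at h2; exact h2
  have : pne α α = true := List.mem_takeWhile_imp (x := α) (by rw [hc]; exact hm)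
  simp [pne] at this

lemma head_dropWhile_eq {α : V} {c : List V} (h : c.dropWhile (pne α) ≠ []) :
    (c.dropWhile (pne α)).head h = α := by
  have h2 := List.head_dropWhile_not (pne α) h
  simpa [pne] using h2

lemma split_walk {α : V} {c : List V} (hm : α ∈ c) :
    c = c.takeWhile (pne α) ++ α :: (c.dropWhile (pne α)).tail := by
  have hne := dropWhile_ne_nil_of_mem hm
  have h := List.cons_head_tail hne
  rw [head_dropWhile_eq hne] at h
  conv_lhs => rw [← List.takeWhile_append_dropWhile (p := pne α) (l := c), ← h]

lemma not_mem_takeWhile {α : V} (c : List V) : α ∉ c.takeWhile (pne α) := by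
  intro h
  have : pne α α = true := List.mem_takeWhile_imp h
  simp [pne] at this

/-- First-return blocks at `α` (recorded by internal vertices). -/
def FRP (S : Finset V) (α : V) (c : List V) : Prop :=
  α ∉ c ∧ (∀ v ∈ c, v ∈ S) ∧ List.Chain E α (c ++ [α])

noncomputable def FRgf (S : Finset V) (α : V) : PowerSeries ℚ :=
  PowerSeries.mk fun n => (Nat.card {c : List V // c.length = n ∧ FRP E S α c} : ℚ)

noncomputable def Agf (S : Finset V) (α ω : V) : PowerSeries ℚ :=
  PowerSeries.mk fun n =>
    (Nat.card {c : List V // (c.length = n ∧ IsWalkT E S α ω c) ∧ α ∉ c} : ℚ)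

lemma concat_walk_iff {S : Finset V} {α ω : V} (hα : α ∈ S) (c₁ c₂ : List V) :
    IsWalkT E S α ω (c₁ ++ α :: c₂) ↔
      (((∀ v ∈ c₁, v ∈ S) ∧ List.Chain E α (c₁ ++ [α])) ∧ IsWalkT E S α ω c₂) := by
  unfold IsWalkT
  rw [getLastD_append_cons]
  simp only [List.Chain]
  rw [List.isChain_cons_split]
  constructor
  · rintro ⟨hmem, ⟨h1, h2⟩, hlast⟩
    exact ⟨⟨fun v hv => hmem v (by simp [hv]), h1⟩, fun v hv => hmem v (by simp [hv]), h2, hlast⟩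
  · rintro ⟨⟨hm1, h1⟩, hm2, h2, hlast⟩
    refine ⟨fun v hv => ?_, ⟨h1, h2⟩, hlast⟩
    rcases List.mem_append.mp hv with h | h
    · exact hm1 v h
    · rcases List.mem_cons.mp h with rfl | h
      · exact hα
      · exact hm2 v h

noncomputable def walkEquiv (S : Finset V) (α ω : V) (hα : α ∈ S) :
    {c : List V // IsWalkT E S α ω c ∧ α ∈ c} ≃
      {c : List V // FRP E S α c} × {c : List V // IsWalkT E S α ω c} where
  toFun x :=
    (⟨x.1.takeWhile (pne α), by
        have hw := (concat_walk_iff E hα _ _).mp ((split_walk x.2.2) ▸ x.2.1)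
        exact ⟨not_mem_takeWhile _, hw.1.1, hw.1.2⟩⟩,
     ⟨(x.1.dropWhile (pne α)).tail, by
        have hw := (concat_walk_iff E hα _ _).mp ((split_walk x.2.2) ▸ x.2.1)
        exact hw.2⟩)
  invFun y :=
    ⟨y.1.1 ++ α :: y.2.1, by
      refine ⟨(concat_walk_iff E hα _ _).mpr ⟨⟨y.1.2.2.1, y.1.2.2.2⟩, y.2.2⟩, by simp⟩⟩
  left_inv x := Subtype.ext (split_walk x.2.2).symm
  right_inv y := by
    obtain ⟨⟨c₁, h₁⟩, ⟨c₂, h₂⟩⟩ := y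
    have hp : ∀ x ∈ c₁, pne α x := by
      intro x hx
      simp only [pne, decide_eq_true_eq]
      exact fun hxα => h₁.1 (hxα ▸ hx)
    have hpα : ¬ pne α α = true := by simp [pne]
    have ht : (c₁ ++ α :: c₂).takeWhile (pne α) = c₁ := takeWhile_append_of _ α hpα c₁ c₂ hp
    have hd : (c₁ ++ α :: c₂).dropWhile (pne α) = α :: c₂ := dropWhile_append_of _ α hpα c₁ c₂ hp
    refine Prod.ext ?_ ?_
    · apply Subtype.ext; exact ht
    · apply Subtype.ext
      show ((c₁ ++ α :: c₂).dropWhile (pne α)).tail = c₂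
      rw [hd]
      rfl

lemma W_decomp (S : Finset V) (α ω : V) (hα : α ∈ S) :
    Wgf E S α ω = Agf E S α ω + (X * FRgf E S α) * Wgf E S α ω := by
  haveI hfin : ∀ n, Finite {c : List V // c.length = n ∧ IsWalkT E S α ω c} :=
    fun n => finite_len _ n
  have hsplit : ∀ n : ℕ,
      Nat.card {c : List V // c.length = n ∧ IsWalkT E S α ω c} =
        Nat.card {c : List V // (c.length = n ∧ IsWalkT E S α ω c) ∧ α ∉ c} +
        Nat.card {c : List V // (c.length = n ∧ IsWalkT E S α ω c) ∧ α ∈ c} := by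
    intro n
    haveI := finite_len (fun c => IsWalkT E S α ω c) n
    rw [nat_card_split (fun c : List V => c.length = n ∧ IsWalkT E S α ω c)
      (fun c => α ∉ c)]
    have hcc : Nat.card {c : List V // (c.length = n ∧ IsWalkT E S α ω c) ∧ ¬ α ∉ c} =
        Nat.card {c : List V // (c.length = n ∧ IsWalkT E S α ω c) ∧ α ∈ c} :=
      Nat.card_congr (Equiv.subtypeEquivRight (fun c => by tauto))
    omega
  have hmul :
      (PowerSeries.mk fun n =>
        (Nat.card {c : List V // (c.length = n ∧ IsWalkT E S α ω c) ∧ α ∈ c} : ℚ)) =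
      (X * FRgf E S α) * Wgf E S α ω := by
    haveI : ∀ n, Finite {a : {c : List V // FRP E S α c} // a.1.length + 1 = n} :=
      fun n => finite_len_nest' _ n
    haveI : ∀ n, Finite {b : {c : List V // IsWalkT E S α ω c} // b.1.length = n} :=
      fun n => finite_len_nest _ n
    have hmc := mk_card_mul (fun a : {c : List V // FRP E S α c} => a.1.length + 1)
      (fun b : {c : List V // IsWalkT E S α ω c} => b.1.length)
      (fun x : {c : List V // IsWalkT E S α ω c ∧ α ∈ c} => x.1.length)
      (walkEquiv E S α ω hα)
      (by
        intro x
        show x.1.length = (x.1.takeWhile (pne α)).length + 1 +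
          ((x.1.dropWhile (pne α)).tail).length
        conv_lhs => rw [split_walk x.2.2]
        simp [List.length_append]
        omega)
    have hL : (PowerSeries.mk fun n =>
        (Nat.card {x : {c : List V // IsWalkT E S α ω c ∧ α ∈ c} // x.1.length = n} : ℚ)) =
        (PowerSeries.mk fun n =>
        (Nat.card {c : List V // (c.length = n ∧ IsWalkT E S α ω c) ∧ α ∈ c} : ℚ)) := by
      ext n
      rw [PowerSeries.coeff_mk, PowerSeries.coeff_mk,
        nat_card_nest (fun c : List V => IsWalkT E S α ω c ∧ α ∈ c)
          (fun c : List V => c.length = n)]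
      congr 1
      exact Nat.card_congr (Equiv.subtypeEquivRight (fun c => by tauto))
    have hA : (PowerSeries.mk fun n =>
        (Nat.card {a : {c : List V // FRP E S α c} // a.1.length + 1 = n} : ℚ)) =
        X * FRgf E S α := by
      rw [mk_card_shift]
      congr 1
      unfold FRgf
      ext n
      rw [PowerSeries.coeff_mk, PowerSeries.coeff_mk,
        nat_card_nest (fun c : List V => FRP E S α c) (fun c : List V => c.length = n)]
      congr 1
      exact Nat.card_congr (Equiv.subtypeEquivRight (fun c => by tauto))
    have hB : (PowerSeries.mk fun n =>
        (Nat.card {b : {c : List V // IsWalkT E S α ω c} // b.1.length = n} : ℚ)) =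
        Wgf E S α ω := by
      unfold Wgf
      ext n
      rw [PowerSeries.coeff_mk, PowerSeries.coeff_mk,
        nat_card_nest (fun c : List V => IsWalkT E S α ω c) (fun c : List V => c.length = n)]
      congr 1
      exact Nat.card_congr (Equiv.subtypeEquivRight (fun c => by tauto))
    rw [← hL, hmc, hA, hB]
  rw [← hmul]
  unfold Wgf Agf
  ext n
  simp only [PowerSeries.coeff_mk, map_add, PowerSeries.coeff_mk]
  rw [hsplit n]
  push_cast
  ring

end Decomp



section Structure

open PowerSeries
open scoped Classical

variable {V : Type} [Fintype V] [DecidableEq V] (E : V → V → Prop)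

lemma headD_cons_tail {c : List V} (d : V) (h : c ≠ []) : c.headD d :: c.tail = c := by
  cases c with
  | nil => exact absurd rfl h
  | cons v r => rfl

lemma getLastD_mem_of_ne_nil {c : List V} (h : c ≠ []) (a : V) : c.getLastD a ∈ c := by
  cases c with
  | nil => exact absurd rfl h
  | cons v r =>
    rw [List.getLastD_cons]
    exact List.getLastD_mem_cons (l := r) (a := v)

lemma Agf_self (S : Finset V) (α : V) : Agf E S α α = 1 := by
  unfold Agf
  ext n
  rw [PowerSeries.coeff_mk, PowerSeries.coeff_one]
  cases n with
  | zero =>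
    haveI : Nonempty {c : List V // (c.length = 0 ∧ IsWalkT E S α α c) ∧ α ∉ c} :=
      ⟨⟨[], ⟨rfl, ⟨fun v hv => absurd hv (List.not_mem_nil), List.Chain.nil, rfl⟩⟩,
        List.not_mem_nil⟩⟩
    haveI : Subsingleton {c : List V // (c.length = 0 ∧ IsWalkT E S α α c) ∧ α ∉ c} := by
      constructor
      rintro ⟨a, ⟨ha, _⟩, _⟩ ⟨b, ⟨hb, _⟩, _⟩
      apply Subtype.ext
      simp only
      rw [List.length_eq_zero_iff.mp ha, List.length_eq_zero_iff.mp hb]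
    rw [Nat.card_unique, if_pos rfl, Nat.cast_one]
  | succ m =>
    haveI : IsEmpty {c : List V // (c.length = m + 1 ∧ IsWalkT E S α α c) ∧ α ∉ c} := by
      constructor
      rintro ⟨c, ⟨hlen, hw⟩, hno⟩
      have hne : c ≠ [] := by
        intro h; rw [h] at hlen; exact Nat.succ_ne_zero m hlen.symm
      apply hno
      have := getLastD_mem_of_ne_nil hne α
      rwa [hw.2.2] at this
    rw [Nat.card_of_isEmpty, if_neg (Nat.succ_ne_zero m), Nat.cast_zero]

lemma cons_walk_iff (S : Finset V) (α ω β : V) (r : List V) :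
    (IsWalkT E S α ω (β :: r) ∧ α ∉ (β :: r)) ↔
      (IsWalkT E (S.erase α) β ω r ∧ (β ∈ S.erase α ∧ E α β)) := by
  unfold IsWalkT
  simp only [List.Chain]
  rw [List.chain_cons, List.getLastD_cons]
  constructor
  · rintro ⟨⟨hmem, ⟨hαβ, hch⟩, hlast⟩, hno⟩
    have h1 : α ≠ β := fun h => hno (h ▸ List.mem_cons_self)
    have h2 : α ∉ r := fun h => hno (List.mem_cons_of_mem β h)
    exact ⟨⟨fun v hv => Finset.mem_erase.mpr
        ⟨fun hvα => h2 (hvα ▸ hv), hmem v (List.mem_cons_of_mem β hv)⟩, hch, hlast⟩,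
      Finset.mem_erase.mpr ⟨fun hβα => h1 hβα.symm, hmem β (List.mem_cons_self)⟩, hαβ⟩
  · rintro ⟨⟨hmem, hch, hlast⟩, hβ, hαβ⟩
    obtain ⟨hβα, hβS⟩ := Finset.mem_erase.mp hβ
    refine ⟨⟨fun v hv => ?_, ⟨hαβ, hch⟩, hlast⟩, ?_⟩
    · rcases List.mem_cons.mp hv with rfl | hv
      · exact hβS
      · exact (Finset.mem_erase.mp (hmem v hv)).2
    · intro hv
      rcases List.mem_cons.mp hv with h | h
      · exact hβα h.symm
      · exact (Finset.mem_erase.mp (hmem α h)).1 rfl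

lemma Agf_ne (S : Finset V) (α ω : V) (hne : ω ≠ α) :
    Agf E S α ω = ∑ β : V,
      X * (if β ∈ S.erase α ∧ E α β then Wgf E (S.erase α) β ω else 0) := by
  unfold Agf
  ext n
  rw [PowerSeries.coeff_mk, map_sum]
  have hconv : ∀ n : ℕ,
      Nat.card {c : List V // (c.length = n ∧ IsWalkT E S α ω c) ∧ α ∉ c} =
      Nat.card {c : List V // c.length = n ∧ (IsWalkT E S α ω c ∧ α ∉ c)} := fun n =>
    Nat.card_congr (Equiv.subtypeEquivRight fun c => by tauto)
  cases n with
  | zero =>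
    haveI : IsEmpty {c : List V // (c.length = 0 ∧ IsWalkT E S α ω c) ∧ α ∉ c} := by
      constructor
      rintro ⟨c, ⟨hlen, hw⟩, _⟩
      rw [List.length_eq_zero_iff.mp hlen] at hw
      exact hne hw.2.2.symm
    rw [Nat.card_of_isEmpty, Nat.cast_zero]
    symm
    refine Finset.sum_eq_zero fun β _ => ?_
    rw [PowerSeries.coeff_zero_eq_constantCoeff, map_mul, PowerSeries.constantCoeff_X, zero_mul]
  | succ m =>
    rw [hconv]
    haveI := finite_len (fun c => IsWalkT E S α ω c ∧ α ∉ c) (m + 1)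
    rw [nat_card_fiber (fun c : List V => c.length = m + 1 ∧ (IsWalkT E S α ω c ∧ α ∉ c))
      (fun c => c.headD α)]
    push_cast
    refine Finset.sum_congr rfl fun β _ => ?_
    rw [PowerSeries.coeff_succ_X_mul, apply_ite (PowerSeries.coeff m), map_zero, Wgf,
      PowerSeries.coeff_mk]
    by_cases hK : β ∈ S.erase α ∧ E α β
    · rw [if_pos hK]
      have hcard : Nat.card {c : List V //
          (c.length = m + 1 ∧ (IsWalkT E S α ω c ∧ α ∉ c)) ∧ c.headD α = β} =
          Nat.card {r : List V // r.length = m ∧ IsWalkT E (S.erase α) β ω r} := by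
        refine Nat.card_congr
          { toFun := fun c => ⟨c.1.tail, by
              obtain ⟨⟨hlen, hw, hno⟩, hh⟩ := c.2
              have hne' : c.1 ≠ [] := by
                intro h; rw [h] at hlen; exact Nat.succ_ne_zero m hlen.symm
              have hc : β :: c.1.tail = c.1 := by
                have hct := headD_cons_tail α hne'
                rw [hh] at hct; exact hct
              rw [← hc] at hw hno hlen
              have := (cons_walk_iff E S α ω β c.1.tail).mp ⟨hw, hno⟩
              exact ⟨by simpa using hlen, this.1⟩⟩
            invFun := fun r => ⟨β :: r.1, by
              have := (cons_walk_iff E S α ω β r.1).mpr ⟨r.2.2, hK⟩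
              exact ⟨⟨by simp [r.2.1], this.1, this.2⟩, rfl⟩⟩
            left_inv := fun c => by
              apply Subtype.ext
              obtain ⟨⟨hlen, _, _⟩, hh⟩ := c.2
              have hne' : c.1 ≠ [] := by
                intro h; rw [h] at hlen; exact Nat.succ_ne_zero m hlen.symm
              show β :: c.1.tail = c.1
              have hct := headD_cons_tail α hne'
              rw [hh] at hct; exact hct
            right_inv := fun r => Subtype.ext rfl }
      rw [hcard]
    · rw [if_neg hK]
      haveI : IsEmpty {c : List V //
          (c.length = m + 1 ∧ (IsWalkT E S α ω c ∧ α ∉ c)) ∧ c.headD α = β} := by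
        constructor
        rintro ⟨c, ⟨hlen, hw, hno⟩, hh⟩
        have hne' : c ≠ [] := by
          intro h; rw [h] at hlen; exact Nat.succ_ne_zero m hlen.symm
        have hc : β :: c.tail = c := by
          have hct := headD_cons_tail α hne'
          rw [hh] at hct; exact hct
        rw [← hc] at hw hno
        exact hK ((cons_walk_iff E S α ω β c.tail).mp ⟨hw, hno⟩).2
      rw [Nat.card_of_isEmpty, Nat.cast_zero]

lemma cons_FRP_iff (S : Finset V) (α β γ : V) (r : List V) :
    (FRP E S α (β :: r) ∧ r.getLastD β = γ) ↔
      (IsWalkT E (S.erase α) β γ r ∧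
        (β ∈ S.erase α ∧ γ ∈ S.erase α ∧ E α β ∧ E γ α)) := by
  unfold FRP IsWalkT
  rw [List.cons_append]
  simp only [List.Chain]
  rw [List.chain_cons, show List.IsChain E (β :: (r ++ [α])) ↔ _ from chain_concat_iff β α r]
  constructor
  · rintro ⟨⟨hno, hmem, hαβ, hch, hlst⟩, hγ⟩
    have h1 : α ≠ β := fun h => hno (h ▸ List.mem_cons_self)
    have h2 : α ∉ r := fun h => hno (List.mem_cons_of_mem β h)
    have hmem' : ∀ v ∈ r, v ∈ S.erase α := fun v hv => Finset.mem_erase.mpr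
      ⟨fun hvα => h2 (hvα ▸ hv), hmem v (List.mem_cons_of_mem β hv)⟩
    have hβ' : β ∈ S.erase α :=
      Finset.mem_erase.mpr ⟨fun hβα => h1 hβα.symm, hmem β (List.mem_cons_self)⟩
    have hγ' : γ ∈ S.erase α := by
      rcases List.eq_nil_or_concat r with rfl | _
      · rw [show γ = β from hγ.symm]; exact hβ'
      · rcases (List.eq_nil_or_concat r) with rfl | ⟨l, b, rfl⟩
        · rw [show γ = β from hγ.symm]; exact hβ'
        · refine hmem' γ ?_
          rw [← hγ]
          exact getLastD_mem_of_ne_nil (by simp) β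
    exact ⟨⟨hmem', hch, hγ⟩, hβ', hγ', hαβ, hγ ▸ hlst⟩
  · rintro ⟨⟨hmem, hch, hlst⟩, hβ, hγ, hαβ, hγα⟩
    obtain ⟨hβα, hβS⟩ := Finset.mem_erase.mp hβ
    refine ⟨⟨?_, fun v hv => ?_, hαβ, hch, ?_⟩, hlst⟩
    · intro hv
      rcases List.mem_cons.mp hv with h | h
      · exact hβα h.symm
      · exact (Finset.mem_erase.mp (hmem α h)).1 rfl
    · rcases List.mem_cons.mp hv with rfl | hv
      · exact hβS
      · exact (Finset.mem_erase.mp (hmem v hv)).2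
    · rw [hlst]; exact hγα

lemma FRgf_eq (S : Finset V) (α : V) :
    FRgf E S α = (if E α α then 1 else 0) +
      ∑ p : V × V, X * (if p.1 ∈ S.erase α ∧ p.2 ∈ S.erase α ∧ E α p.1 ∧ E p.2 α
        then Wgf E (S.erase α) p.1 p.2 else 0) := by
  unfold FRgf
  ext n
  rw [PowerSeries.coeff_mk, map_add, map_sum]
  cases n with
  | zero =>
    have hz : ∀ β : V × V, (PowerSeries.coeff 0)
        (X * (if β.1 ∈ S.erase α ∧ β.2 ∈ S.erase α ∧ E α β.1 ∧ E β.2 α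
          then Wgf E (S.erase α) β.1 β.2 else 0)) = 0 := fun β => by
      rw [PowerSeries.coeff_zero_eq_constantCoeff, map_mul, PowerSeries.constantCoeff_X,
        zero_mul]
    have h1 : (PowerSeries.coeff 0) (if E α α then (1 : PowerSeries ℚ) else 0) =
        (if E α α then (1 : ℚ) else 0) := by
      by_cases hE : E α α <;> simp [hE]
    rw [Finset.sum_congr rfl (fun β _ => hz β), Finset.sum_const, smul_zero, add_zero, h1]
    by_cases hE : E α α
    · rw [if_pos hE]
      haveI : Nonempty {c : List V // c.length = 0 ∧ FRP E S α c} :=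
        ⟨⟨[], rfl, List.not_mem_nil, fun v hv => absurd hv (List.not_mem_nil),
          by rw [List.nil_append]; exact List.isChain_pair.mpr hE⟩⟩
      haveI : Subsingleton {c : List V // c.length = 0 ∧ FRP E S α c} := by
        constructor
        rintro ⟨a, ha, _⟩ ⟨b, hb, _⟩
        apply Subtype.ext
        simp only
        rw [List.length_eq_zero_iff.mp ha, List.length_eq_zero_iff.mp hb]
      rw [Nat.card_unique, Nat.cast_one]
    · rw [if_neg hE]
      haveI : IsEmpty {c : List V // c.length = 0 ∧ FRP E S α c} := by
        constructor
        rintro ⟨c, hlen, hfrp⟩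
        rw [List.length_eq_zero_iff.mp hlen] at hfrp
        have := hfrp.2.2
        rw [List.nil_append] at this
        exact hE (List.isChain_pair.mp this)
      rw [Nat.card_of_isEmpty, Nat.cast_zero]
  | succ m =>
    have h1 : (PowerSeries.coeff (m + 1)) (if E α α then (1 : PowerSeries ℚ) else 0) = 0 := by
      rw [apply_ite (PowerSeries.coeff (m + 1)), PowerSeries.coeff_one,
        if_neg (Nat.succ_ne_zero m), map_zero, ite_self]
    rw [h1, zero_add]
    haveI := finite_len (fun c => FRP E S α c) (m + 1)
    rw [nat_card_fiber (fun c : List V => c.length = m + 1 ∧ FRP E S α c)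
      (fun c => (c.headD α, c.tail.getLastD (c.headD α)))]
    push_cast
    refine Finset.sum_congr rfl fun p _ => ?_
    obtain ⟨β, γ⟩ := p
    rw [PowerSeries.coeff_succ_X_mul, apply_ite (PowerSeries.coeff m), map_zero, Wgf,
      PowerSeries.coeff_mk]
    have hfiber : ∀ c : List V, ((c.length = m + 1 ∧ FRP E S α c) ∧
        (c.headD α, c.tail.getLastD (c.headD α)) = (β, γ)) ↔
        (c.length = m + 1 ∧ ∃ r : List V, c = β :: r ∧ (FRP E S α (β :: r) ∧
          r.getLastD β = γ)) := by
      intro c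
      constructor
      · rintro ⟨⟨hlen, hfrp⟩, hp⟩
        have hne' : c ≠ [] := by
          intro h; rw [h] at hlen; exact Nat.succ_ne_zero m hlen.symm
        obtain ⟨hh, ht⟩ := Prod.mk.injEq .. ▸ hp
        have hc : β :: c.tail = c := by
          have hct := headD_cons_tail α hne'
          rw [hh] at hct; exact hct
        rw [hh] at ht
        exact ⟨hlen, c.tail, hc.symm, hc.symm ▸ hfrp, ht⟩
      · rintro ⟨hlen, r, rfl, hfrp, hlst⟩
        exact ⟨⟨hlen, hfrp⟩, by simp only [List.headD_cons, List.tail_cons, hlst]⟩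
    by_cases hK : β ∈ S.erase α ∧ γ ∈ S.erase α ∧ E α β ∧ E γ α
    · rw [if_pos hK]
      have hcard : Nat.card {c : List V // (c.length = m + 1 ∧ FRP E S α c) ∧
          (c.headD α, c.tail.getLastD (c.headD α)) = (β, γ)} =
          Nat.card {r : List V // r.length = m ∧ IsWalkT E (S.erase α) β γ r} := by
        refine Nat.card_congr
          { toFun := fun c => ⟨c.1.tail, by
              obtain ⟨hlen, r, hc, hfrp, hlst⟩ := (hfiber c.1).mp c.2
              rw [hc]
              have := (cons_FRP_iff E S α β γ r).mp ⟨hfrp, hlst⟩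
              refine ⟨?_, this.1⟩
              rw [hc] at hlen
              simpa using hlen⟩
            invFun := fun r => ⟨β :: r.1, by
              have := (cons_FRP_iff E S α β γ r.1).mpr ⟨r.2.2, hK⟩
              refine (hfiber (β :: r.1)).mpr ⟨by simp [r.2.1], r.1, rfl, this⟩⟩
            left_inv := fun c => by
              apply Subtype.ext
              obtain ⟨hlen, r, hc, _, _⟩ := (hfiber c.1).mp c.2
              show β :: (c.1).tail = c.1
              rw [hc]
              rfl
            right_inv := fun r => Subtype.ext rfl }
      rw [hcard]
    · rw [if_neg hK]
      haveI : IsEmpty {c : List V // (c.length = m + 1 ∧ FRP E S α c) ∧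
          (c.headD α, c.tail.getLastD (c.headD α)) = (β, γ)} := by
        constructor
        rintro ⟨c, hc⟩
        obtain ⟨hlen, r, hceq, hfrp, hlst⟩ := (hfiber c).mp hc
        exact hK ((cons_FRP_iff E S α β γ r).mp ⟨hfrp, hlst⟩).2
      rw [Nat.card_of_isEmpty, Nat.cast_zero]

end Structure



section Main

open PowerSeries
open scoped Classical

variable {V : Type} [Fintype V] [DecidableEq V] (E : V → V → Prop)

lemma getLast?_cons_eq : ∀ (β : V) (r : List V), (β :: r).getLast? = some (r.getLastD β)
  | _, [] => rfl
  | β, v :: r => by rw [List.getLast?_cons_cons, getLast?_cons_eq v r, List.getLastD_cons]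

lemma eq_cons_of_head? {L : List V} {α : V} (h : L.head? = some α) : L = α :: L.tail := by
  cases L with
  | nil => exact absurd h (by simp)
  | cons v r =>
    have hv : v = α := by simpa using h
    subst hv
    rfl

lemma mem_pathSet_cons_iff (S : Finset V) (β γ : V) (r : List V) :
    (β :: r) ∈ pathSet E S β γ ↔ ((β :: r).Nodup ∧ IsWalkT E S β γ r ∧ β ∈ S) := by
  unfold pathSet IsWalkT
  constructor
  · rintro ⟨hnd, _, hlast, hch, hmem⟩
    rw [getLast?_cons_eq] at hlast
    exact ⟨hnd, ⟨fun v hv => hmem v (List.mem_cons_of_mem β hv), hch,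
      Option.some.inj hlast⟩, hmem β (List.mem_cons_self)⟩
  · rintro ⟨hnd, ⟨hmem, hch, hlast⟩, hβ⟩
    refine ⟨hnd, rfl, ?_, hch, fun v hv => ?_⟩
    · rw [getLast?_cons_eq, hlast]
    · rcases List.mem_cons.mp hv with rfl | hv
      · exact hβ
      · exact hmem v hv

lemma walk_ne_nil {S : Finset V} {α ω : V} {c : List V} (hw : IsWalkT E S α ω c)
    (hne : ω ≠ α) : c ≠ [] := by
  intro h
  rw [h] at hw
  exact hne hw.2.2.symm

lemma constCoeff_cycsum (S : Finset V) (α : V) :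
    PowerSeries.constantCoeff (∑ᶠ c ∈ cycSet E S α,
      (PowerSeries.X : PowerSeries ℚ) ^ (c.length + 1) *
        dressProd (dressF E) (S.erase α) c) = 0 := by
  rw [← Set.Finite.coe_toFinset (cycSet_finite E S α), finsum_mem_coe_finset, map_sum]
  refine Finset.sum_eq_zero fun c _ => ?_
  rw [map_mul, map_pow, PowerSeries.constantCoeff_X, zero_pow (Nat.succ_ne_zero c.length),
    zero_mul]

theorem Wgf_eq_pathsum (S : Finset V) : ∀ (α ω : V), α ∈ S → ω ∈ S →
    Wgf E S α ω = ∑ᶠ L ∈ pathSet E S α ω,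
      (PowerSeries.X : PowerSeries ℚ) ^ (L.length - 1) * dressProd (dressF E) S L := by
  induction S using Finset.strongInduction with
  | _ S ih =>
  intro α ω hα hω
  have IH := fun (β γ : V) (hβ : β ∈ S.erase α) (hγ : γ ∈ S.erase α) =>
    ih (S.erase α) (Finset.erase_ssubset hα) β γ hβ hγ
  -- the cycle sum
  set cycsum : PowerSeries ℚ := ∑ᶠ c ∈ cycSet E S α,
    (PowerSeries.X : PowerSeries ℚ) ^ (c.length + 1) *
      dressProd (dressF E) (S.erase α) c with hcycsum
  have hconst : PowerSeries.constantCoeff (1 - cycsum) ≠ 0 := by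
    rw [map_sub, map_one, hcycsum, constCoeff_cycsum]
    norm_num
  have hdF : dressF E S α * (1 - cycsum) = 1 :=
    (PowerSeries.eq_inv_iff_mul_eq_one hconst).mp (dressF_eq E S α hα)
  -- Step A : X * FRgf = cycsum
  have hXFR : X * FRgf E S α = cycsum := by
    rw [FRgf_eq, hcycsum, ← Set.Finite.coe_toFinset (cycSet_finite E S α),
      finsum_mem_coe_finset, mul_add, Finset.mul_sum]
    rw [← Finset.sum_filter_add_sum_filter_not ((cycSet_finite E S α).toFinset)
      (fun c => c = []) (fun c => (PowerSeries.X : PowerSeries ℚ) ^ (c.length + 1) *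
        dressProd (dressF E) (S.erase α) c)]
    congr 1
    -- empty cycle
    · by_cases hE : E α α
      · have hset : ((cycSet_finite E S α).toFinset).filter (fun c => c = []) = {[]} := by
          apply Finset.ext
          intro c
          simp only [Finset.mem_filter, Set.Finite.mem_toFinset, Finset.mem_singleton]
          constructor
          · rintro ⟨_, rfl⟩; rfl
          · rintro rfl
            refine ⟨⟨List.nodup_nil, List.not_mem_nil,
              fun v hv => absurd hv (List.not_mem_nil), ?_⟩, rfl⟩
            rw [List.nil_append]
            exact List.isChain_pair.mpr hE
        rw [hset, if_pos hE, Finset.sum_singleton, mul_one]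
        show (X : PowerSeries ℚ) = X ^ 1 * dressProd (dressF E) (S.erase α) []
        rw [pow_one]
        show (X : PowerSeries ℚ) = X * 1
        rw [mul_one]
      · have hset : ((cycSet_finite E S α).toFinset).filter (fun c => c = []) = ∅ := by
          apply Finset.ext
          intro c
          simp only [Finset.mem_filter, Set.Finite.mem_toFinset, Finset.notMem_empty,
            iff_false, not_and]
          intro hc hcnil
          rw [hcnil] at hc
          obtain ⟨-, -, -, hch⟩ := hc
          rw [List.nil_append] at hch
          exact hE (List.isChain_pair.mp hch)
        rw [hset, if_neg hE, Finset.sum_empty, mul_zero]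
    -- nonempty cycles
    · rw [← Finset.sum_fiberwise
        (((cycSet_finite E S α).toFinset).filter (fun c => ¬ c = []))
        (fun c => ((c.headD α, c.tail.getLastD (c.headD α)) : V × V))
        (fun c => (PowerSeries.X : PowerSeries ℚ) ^ (c.length + 1) *
          dressProd (dressF E) (S.erase α) c)]
      refine Finset.sum_congr rfl fun p _ => ?_
      obtain ⟨β, γ⟩ := p
      have hmemiff : ∀ c : List V,
          (c ∈ cycSet E S α ∧ ¬ c = [] ∧ (c.headD α, c.tail.getLastD (c.headD α)) = (β, γ)) ↔
          ((β ∈ S.erase α ∧ γ ∈ S.erase α ∧ E α β ∧ E γ α) ∧ c ∈ pathSet E (S.erase α) β γ) := by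
        intro c
        constructor
        · rintro ⟨hcyc, hne, hp⟩
          obtain ⟨hh, ht⟩ := Prod.mk.injEq .. ▸ hp
          have hc : β :: c.tail = c := by
            have hct := headD_cons_tail α hne
            rw [hh] at hct; exact hct
          rw [hh] at ht
          obtain ⟨hnd, hfrp⟩ : c.Nodup ∧ FRP E S α c :=
            ⟨hcyc.1, hcyc.2.1, hcyc.2.2.1, hcyc.2.2.2⟩
          rw [← hc] at hnd hfrp
          have hwk := (cons_FRP_iff E S α β γ c.tail).mp ⟨hfrp, ht⟩
          exact ⟨hwk.2, hc ▸ (mem_pathSet_cons_iff E (S.erase α) β γ c.tail).mpr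
            ⟨hnd, hwk.1, hwk.2.1⟩⟩
        · rintro ⟨hK, hpath⟩
          have hc : c = β :: c.tail := eq_cons_of_head? hpath.2.1
          rw [hc] at hpath
          obtain ⟨hnd, hwk, hβ⟩ := (mem_pathSet_cons_iff E (S.erase α) β γ c.tail).mp hpath
          have hfrp := (cons_FRP_iff E S α β γ c.tail).mpr ⟨hwk, hK⟩
          refine ⟨⟨hc ▸ hnd, hc ▸ hfrp.1.1, hc ▸ hfrp.1.2.1, hc ▸ hfrp.1.2.2⟩,
            by rw [hc]; simp, ?_⟩
          rw [hc]
          simp only [List.headD_cons, List.tail_cons, hfrp.2]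
      by_cases hK : β ∈ S.erase α ∧ γ ∈ S.erase α ∧ E α β ∧ E γ α
      · rw [if_pos hK, IH β γ hK.1 hK.2.1,
          ← Set.Finite.coe_toFinset (pathSet_finite E (S.erase α) β γ),
          finsum_mem_coe_finset, Finset.mul_sum]
        have hset : (((cycSet_finite E S α).toFinset).filter (fun c => ¬ c = [])).filter
            (fun c => ((c.headD α, c.tail.getLastD (c.headD α)) : V × V) = (β, γ)) =
            (pathSet_finite E (S.erase α) β γ).toFinset := by
          apply Finset.ext
          intro c
          simp only [Finset.mem_filter, Set.Finite.mem_toFinset]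
          constructor
          · rintro ⟨⟨h1, h2⟩, h3⟩
            exact ((hmemiff c).mp ⟨h1, h2, h3⟩).2
          · intro h
            obtain ⟨h1, h2, h3⟩ := (hmemiff c).mpr ⟨hK, h⟩
            exact ⟨⟨h1, h2⟩, h3⟩
        rw [hset, Finset.mul_sum]
        refine Finset.sum_congr rfl fun L hL => ?_
        have hLne : L ≠ [] := by
          rw [Set.Finite.mem_toFinset] at hL
          intro h
          rw [h] at hL
          exact absurd hL.2.1 (by simp)
        obtain ⟨m, hm⟩ : ∃ m, L.length = m + 1 :=
          ⟨L.length - 1, by have := List.length_pos_iff.mpr hLne; omega⟩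
        rw [hm, Nat.add_sub_cancel, show m + 1 + 1 = m + 2 from rfl, pow_add]
        ring
      · rw [if_neg hK]
        have hset : (((cycSet_finite E S α).toFinset).filter (fun c => ¬ c = [])).filter
            (fun c => ((c.headD α, c.tail.getLastD (c.headD α)) : V × V) = (β, γ)) = ∅ := by
          apply Finset.ext
          intro c
          simp only [Finset.mem_filter, Set.Finite.mem_toFinset, Finset.notMem_empty,
            iff_false]
          rintro ⟨⟨h1, h2⟩, h3⟩
          exact hK ((hmemiff c).mp ⟨h1, h2, h3⟩).1
        rw [hset, Finset.sum_empty, mul_zero, mul_zero]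
  -- the master equation
  have hmaster : Wgf E S α ω = Agf E S α ω * dressF E S α := by
    have hdec := W_decomp E S α ω hα
    have : Wgf E S α ω * (1 - cycsum) = Agf E S α ω := by
      rw [← hXFR]
      linear_combination hdec
    calc Wgf E S α ω = Wgf E S α ω * ((1 - cycsum) * dressF E S α) := by
          rw [mul_comm (1 - cycsum), hdF, mul_one]
      _ = (Wgf E S α ω * (1 - cycsum)) * dressF E S α := by ring
      _ = Agf E S α ω * dressF E S α := by rw [this]
  by_cases hωα : ω = α
  · -- diagonal case
    subst hωα
    rw [hmaster, Agf_self, one_mul]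
    have hset : pathSet E S ω ω = {[ω]} := by
      apply Set.ext
      intro L
      constructor
      · intro hL
        have hc : L = ω :: L.tail := eq_cons_of_head? hL.2.1
        rw [hc] at hL
        obtain ⟨hnd, hwk, _⟩ := (mem_pathSet_cons_iff E S ω ω L.tail).mp hL
        have htail : L.tail = [] := by
          by_contra hne
          have hmem := getLastD_mem_of_ne_nil hne ω
          rw [hwk.2.2] at hmem
          exact (List.nodup_cons.mp hnd).1 hmem
        rw [hc, htail]
        rfl
      · rintro rfl
        exact (mem_pathSet_cons_iff E S ω ω []).mpr
          ⟨List.nodup_cons.mpr ⟨List.not_mem_nil, List.nodup_nil⟩,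
            ⟨fun v hv => absurd hv (List.not_mem_nil), List.Chain.nil, rfl⟩, hω⟩
    rw [hset, finsum_mem_singleton]
    show dressF E S ω = X ^ 0 * (dressF E S ω * dressProd (dressF E) (S.erase ω) [])
    rw [pow_zero, one_mul]
    show dressF E S ω = dressF E S ω * 1
    rw [mul_one]
  · -- off-diagonal case
    have hωS' : ω ∈ S.erase α := Finset.mem_erase.mpr ⟨hωα, hω⟩
    rw [hmaster, Agf_ne E S α ω hωα, Finset.sum_mul]
    rw [← Set.Finite.coe_toFinset (pathSet_finite E S α ω), finsum_mem_coe_finset]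
    rw [← Finset.sum_fiberwise ((pathSet_finite E S α ω).toFinset)
      (fun L => L.tail.headD α)
      (fun L => (PowerSeries.X : PowerSeries ℚ) ^ (L.length - 1) *
        dressProd (dressF E) S L)]
    refine Finset.sum_congr rfl fun β _ => ?_
    have hmemiff : ∀ L : List V, (L ∈ pathSet E S α ω ∧ L.tail.headD α = β) ↔
        ((β ∈ S.erase α ∧ E α β) ∧ ∃ L' ∈ pathSet E (S.erase α) β ω, L = α :: L') := by
      intro L
      constructor
      · rintro ⟨hL, hh⟩
        have hc : L = α :: L.tail := eq_cons_of_head? hL.2.1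
        rw [hc] at hL
        obtain ⟨hnd, hwk, -⟩ := (mem_pathSet_cons_iff E S α ω L.tail).mp hL
        obtain ⟨hno, hnd'⟩ := List.nodup_cons.mp hnd
        have hwk' := (cons_walk_iff E S α ω β L.tail.tail).mp (by
          have hLt : L.tail = β :: L.tail.tail := by
            have hct := headD_cons_tail α (walk_ne_nil E hwk hωα)
            rw [hh] at hct; exact hct.symm
          rw [← hLt]
          exact ⟨hwk, hno⟩)
        have hLt : L.tail = β :: L.tail.tail := by
          have hct := headD_cons_tail α (walk_ne_nil E hwk hωα)
          rw [hh] at hct; exact hct.symm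
        refine ⟨⟨hwk'.2.1, hwk'.2.2⟩, L.tail, ?_, hc⟩
        rw [hLt]
        exact (mem_pathSet_cons_iff E (S.erase α) β ω L.tail.tail).mpr
          ⟨hLt ▸ hnd', hwk'.1, hwk'.2.1⟩
      · rintro ⟨hK, L', hL', rfl⟩
        have hc : L' = β :: L'.tail := eq_cons_of_head? hL'.2.1
        rw [hc] at hL'
        obtain ⟨hnd', hwk', hβ'⟩ := (mem_pathSet_cons_iff E (S.erase α) β ω L'.tail).mp hL'
        have hwno := (cons_walk_iff E S α ω β L'.tail).mpr ⟨hwk', hK⟩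
        refine ⟨?_, by rw [hc]; simp⟩
        rw [hc]
        exact (mem_pathSet_cons_iff E S α ω (β :: L'.tail)).mpr
          ⟨List.nodup_cons.mpr ⟨hwno.2, hnd'⟩, hwno.1, hα⟩
    by_cases hK : β ∈ S.erase α ∧ E α β
    · rw [if_pos hK, IH β ω hK.1 hωS',
        ← Set.Finite.coe_toFinset (pathSet_finite E (S.erase α) β ω),
        finsum_mem_coe_finset, Finset.mul_sum, Finset.sum_mul]
      have hset : ((pathSet_finite E S α ω).toFinset).filter (fun L => L.tail.headD α = β) =
          ((pathSet_finite E (S.erase α) β ω).toFinset).image (fun L' => α :: L') := by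
        apply Finset.ext
        intro L
        simp only [Finset.mem_filter, Set.Finite.mem_toFinset, Finset.mem_image]
        constructor
        · rintro ⟨h1, h2⟩
          obtain ⟨-, L', hL', rfl⟩ := (hmemiff L).mp ⟨h1, h2⟩
          exact ⟨L', hL', rfl⟩
        · rintro ⟨L', hL', rfl⟩
          exact (hmemiff (α :: L')).mpr ⟨hK, L', hL', rfl⟩
      rw [hset, Finset.sum_image (by
        intro x _ y _ hxy
        exact List.cons.injEq .. ▸ hxy |>.2)]
      refine Finset.sum_congr rfl fun L' hL' => ?_
      rw [Set.Finite.mem_toFinset] at hL'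
      have hL'ne : L' ≠ [] := by
        intro h
        rw [h] at hL'
        exact absurd hL'.2.1 (by simp)
      have hlen : (α :: L').length - 1 = L'.length := by simp
      obtain ⟨m, hm⟩ : ∃ m, L'.length = m + 1 :=
        ⟨L'.length - 1, by have := List.length_pos_iff.mpr hL'ne; omega⟩
      rw [hlen, dressProd, hm, Nat.add_sub_cancel, pow_succ]
      ring
    · rw [if_neg hK]
      have hset : ((pathSet_finite E S α ω).toFinset).filter (fun L => L.tail.headD α = β) =
          ∅ := by
        apply Finset.ext
        intro L
        simp only [Finset.mem_filter, Set.Finite.mem_toFinset, Finset.notMem_empty, iff_false]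
        rintro ⟨h1, h2⟩
        exact hK ((hmemiff L).mp ⟨h1, h2⟩).1
      rw [hset, Finset.sum_empty, mul_zero, zero_mul]

end Main


/-- Path-sum formula for walks: the generating function of the
numbers of walks from `α` to `ω` on a finite quiver equals
`Σ_π z^p · Π_{i=0}^{p} F_{V∖{σ₀,…,σ_{i-1}}}(σ_i)`, the sum running over all simple
paths `π = (σ₀ σ₁ ⋯ σ_p)` of `G` with `σ₀ = α` and `σ_p = ω` (recorded by their
vertex sequences; for `α = ω` the only such path is the trivial one, `p = 0`). -/
theorem stmt11 {V : Type} [Fintype V] [DecidableEq V] (E : V → V → Prop) (α ω : V) :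
    PowerSeries.mk (fun n => (nWalks E n α ω : ℚ)) =
      ∑ᶠ L ∈ {L : List V | L.Nodup ∧ L.head? = some α ∧ L.getLast? = some ω ∧
          L.Chain' E},
        (PowerSeries.X : PowerSeries ℚ) ^ (L.length - 1) *
          dressProd (dressF E) Finset.univ L := by
  have h1 : PowerSeries.mk (fun n => (nWalks E n α ω : ℚ)) = Wgf E Finset.univ α ω := by
    unfold Wgf nWalks
    ext n
    rw [PowerSeries.coeff_mk, PowerSeries.coeff_mk]
    congr 1
    apply Nat.card_congr
    exact
      { toFun := fun L => ⟨L.1.tail, by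
          obtain ⟨hlen, hh, hl, hch⟩ := L.2
          have hc : L.1 = α :: L.1.tail := eq_cons_of_head? hh
          constructor
          · rw [hc] at hlen
            simpa using hlen
          · refine ⟨fun v _ => Finset.mem_univ v, ?_, ?_⟩
            · rw [hc] at hch
              exact hch
            · rw [hc, getLast?_cons_eq] at hl
              exact Option.some.inj hl⟩
        invFun := fun c => ⟨α :: c.1, by
          have h2 := c.2
          refine ⟨by simp [h2.1], rfl, ?_, h2.2.2.1⟩
          rw [getLast?_cons_eq, h2.2.2.2]⟩
        left_inv := fun L => Subtype.ext (eq_cons_of_head? L.2.2.1).symm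
        right_inv := fun c => Subtype.ext rfl }
  have hset : pathSet E (Finset.univ : Finset V) α ω =
      {L : List V | L.Nodup ∧ L.head? = some α ∧ L.getLast? = some ω ∧ L.Chain' E} := by
    apply Set.ext
    intro L
    simp only [pathSet, Set.mem_setOf_eq, Finset.mem_univ, implies_true, and_true]
  rw [h1, Wgf_eq_pathsum E Finset.univ α ω (Finset.mem_univ α) (Finset.mem_univ ω), hset]
end

section
/- Simple paths yield chains of nested simple cycles: let G be a finite quiver and let (ν0 ν1 ⋯ νℓ) be a simple path of G (ℓ ≥ 1) such that each reverse edge (ν(j+1), νj) also belongs to E(G). For 0 ≤ j ≤ ℓ−1 set bj = (νj ν(j+1) νj), a nontrivial simple cycle. Then the right-nested product b0 ⊙ (b1 ⊙ (⋯ ⊙ b(ℓ−1))) is defined (every successive nesting canonical) and equals the closed walk (ν0 ν1 ⋯ ν(ℓ−1) νℓ ν(ℓ−1) ⋯ ν1 ν0); if moreover G has a self-loop L = (νℓ νℓ), then b0 ⊙ (b1 ⊙ (⋯ ⊙ (b(ℓ−1) ⊙ L))) is defined and equals the closed walk (ν0 ν1 ⋯ ν(ℓ−1) νℓ νℓ ν(ℓ−1)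 ⋯ ν1 ν0), a chain of ℓ + 1 recursively nested nontrivial simple cycles whose outermost cycle is based at ν0. -/
/-- A walk on the quiver with vertex set `V` and edge relation `E`:
a nonempty list of vertices in which consecutive vertices are joined by edges. -/
structure QWalk (V : Type) (E : V → V → Prop) : Type where
  verts : List V
  ne : verts ≠ []
  chain : verts.Chain' E

namespace QWalk

variable {V : Type} {E : V → V → Prop}

/-- The initial vertex of a walk. -/
def first (w : QWalk V E) : V := w.verts.head w.ne

/-- The final vertex of a walk. -/
def last (w : QWalk V E) : V := w.verts.getLast w.ne

/-- The length of a walk (its number of edges). -/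
def len (w : QWalk V E) : ℕ := w.verts.length - 1

/-- A walk is trivial when it has length `0`. -/
def Trivial (w : QWalk V E) : Prop := w.len = 0

/-- A walk is a cycle when its initial and final vertices coincide. -/
def IsCycle (w : QWalk V E) : Prop := w.first = w.last

/-- A cycle off the vertex `β`. -/
def IsCycleOff (w : QWalk V E) (β : V) : Prop := w.IsCycle ∧ w.first = β

/-- A simple path: all vertices distinct (trivial walks included). -/
def IsSimplePath (w : QWalk V E) : Prop := w.verts.Nodup

/-- A simple cycle: a cycle whose internal vertices are pairwise distinct and
different from the base vertex (trivial walks included). -/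
def IsSimpleCycle (w : QWalk V E) : Prop := w.IsCycle ∧ w.verts.tail.Nodup

/-- `IsNest a b w` holds precisely when `(a, b)` is a canonical couple (so the nesting
product `a ⊙ b` is defined) and `w = a ⊙ b`: here `b` is a cycle off `β`, the vertex
sequence of `a` decomposes at the *last* occurrence of `β` as `A₁ ++ [β] ++ A₂`,
the couple is canonical (either `a` is also a cycle off `β`, or no vertex other than
`β` visited by `a` strictly before the last occurrence of `β` is visited by `b`),
and `w` is obtained by replacing that last occurrence of `β` by the whole
vertex sequence of `b`. -/
def IsNest (a b w : QWalk V E) : Prop :=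
  ∃ (β : V) (A₁ A₂ : List V),
    b.first = β ∧ b.last = β ∧
    a.verts = A₁ ++ β :: A₂ ∧ β ∉ A₂ ∧
    (a.IsCycleOff β ∨ ∀ v ∈ A₁, v ≠ β → v ∉ b.verts) ∧
    w.verts = A₁ ++ b.verts ++ A₂

/-- Nesting extended by the convention that nesting with a trivial walk acts as the
identity: `(μ) ⊙ w = w ⊙ (μ) = w` for any walk `w` visiting `μ`. -/
def IsNestE (a b w : QWalk V E) : Prop :=
  IsNest a b w ∨ (a.Trivial ∧ a.first ∈ b.verts ∧ w = b)

end QWalk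

namespace QWalk

/-- Right-nested product along a nonempty list:
`RNest [c₁, …, cₙ] w` means `c₁ ⊙ (c₂ ⊙ (⋯ ⊙ (c_{n-1} ⊙ cₙ))) = w`, every
successive nesting being a defined (canonical) nesting product. -/
inductive RNest {V : Type} {E : V → V → Prop} :
    List (QWalk V E) → QWalk V E → Prop
  | single (a : QWalk V E) : RNest [a] a
  | cons {a u w : QWalk V E} {l : List (QWalk V E)} :
      RNest l u → IsNest a u w → RNest (a :: l) w

end QWalk

namespace QWalkAux

open QWalk

variable {V : Type} {E : V → V → Prop}

lemma chain'_sandwich {R : V → V → Prop} {m : List V} {x y : V}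
    (hm : m.Chain' R) (h1 : m.head? = some y) (h2 : m.getLast? = some y)
    (hxy : R x y) (hyx : R y x) : (x :: (m ++ [x])).Chain' R := by
  have hmne : m ≠ [] := by rintro rfl; simp at h1
  show List.IsChain R (x :: (m ++ [x]))
  rw [List.isChain_cons, List.isChain_append]
  refine ⟨?_, hm, List.isChain_singleton x, ?_⟩
  · intro z hz
    rw [List.head?_append_of_ne_nil m hmne, h1] at hz
    simp only [Option.mem_some_iff] at hz
    subst hz; exact hxy
  · intro a ha b hb
    rw [h2] at ha
    simp only [Option.mem_some_iff] at ha
    simp only [List.head?_cons, Option.mem_some_iff] at hb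
    subst ha; subst hb; exact hyx

lemma first_eq (w : QWalk V E) {x : V} (h : w.verts.head? = some x) : w.first = x := by
  have := List.head?_eq_head w.ne
  rw [h] at this
  exact (Option.some_inj.mp this).symm

lemma last_eq (w : QWalk V E) {x : V} (h : w.verts.getLast? = some x) : w.last = x := by
  have := List.getLast?_eq_getLast w.ne
  rw [h] at this
  exact (Option.some_inj.mp this).symm

lemma main_aux (rest : List V) : ∀ (x y : V),
    (x :: y :: rest).Nodup → (x :: y :: rest).Chain' E →
    (x :: y :: rest).Chain' (fun a b => E b a) →
    (∃ (bs : List (QWalk V E)) (w : QWalk V E),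
       bs.length = rest.length + 1 ∧
       (∀ (j : ℕ) (b : QWalk V E), bs[j]? = some b →
         ∃ u v : V, (x :: y :: rest)[j]? = some u ∧ (x :: y :: rest)[j+1]? = some v ∧
           b.verts = [u, v, u] ∧ b.IsSimpleCycle ∧ ¬ b.Trivial) ∧
       RNest bs w ∧ w.verts = (x :: y :: rest) ++ (x :: y :: rest).reverse.tail ∧
       w.first = x ∧ w.last = x ∧ ∀ v ∈ w.verts, v ∈ x :: y :: rest) ∧
    (∀ t, (x :: y :: rest).getLast? = some t → E t t →
      ∃ (bs : List (QWalk V E)) (lp w : QWalk V E),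
       bs.length = rest.length + 1 ∧
       (∀ (j : ℕ) (b : QWalk V E), bs[j]? = some b →
         ∃ u v : V, (x :: y :: rest)[j]? = some u ∧ (x :: y :: rest)[j+1]? = some v ∧
           b.verts = [u, v, u] ∧ b.IsSimpleCycle ∧ ¬ b.Trivial) ∧
       lp.verts = [t, t] ∧ lp.IsSimpleCycle ∧ ¬ lp.Trivial ∧
       RNest (bs ++ [lp]) w ∧
       w.verts = (x :: y :: rest) ++ t :: (x :: y :: rest).reverse.tail ∧
       w.first = x ∧ w.last = x ∧ ∀ v ∈ w.verts, v ∈ x :: y :: rest) := by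
  induction rest with
  | nil =>
    intro x y hnd hc hcr
    have hxy : E x y := (List.isChain_cons_cons.mp hc).1
    have hyx : E y x := (List.isChain_cons_cons.mp hcr).1
    have hne : x ≠ y := by simp [List.nodup_cons] at hnd; tauto
    refine ⟨?_, ?_⟩
    · refine ⟨[⟨[x, y, x], by simp, ?_⟩], ⟨[x, y, x], by simp, ?_⟩, rfl, ?_, RNest.single _, by simp, rfl, rfl, by simp⟩
      · exact List.isChain_cons_cons.mpr ⟨hxy, List.isChain_cons_cons.mpr ⟨hyx, List.isChain_singleton x⟩⟩
      · exact List.isChain_cons_cons.mpr ⟨hxy, List.isChain_cons_cons.mpr ⟨hyx, List.isChain_singleton x⟩⟩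
      · intro j b hb
        match j with
        | 0 =>
          simp only [List.getElem?_cons_zero, Option.some_inj] at hb
          subst hb
          exact ⟨x, y, rfl, rfl, rfl, ⟨rfl, by simp [hne.symm]⟩, by simp [QWalk.Trivial, QWalk.len]⟩
        | j + 1 => simp at hb
    · intro t ht hE
      simp only [List.getLast?_cons_cons, List.getLast?_singleton, Option.some_inj] at ht
      subst ht
      have hchb : List.Chain' E [x, y, x] :=
        List.isChain_cons_cons.mpr ⟨hxy, List.isChain_cons_cons.mpr ⟨hyx, List.isChain_singleton x⟩⟩
      refine ⟨[⟨[x, y, x], by simp, hchb⟩], ⟨[y, y], by simp, List.isChain_cons_cons.mpr ⟨hE, List.isChain_singleton y⟩⟩,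
        ⟨[x, y, y, x], by simp, ?_⟩, rfl, ?_, rfl, ⟨rfl, by simp⟩,
        by simp [QWalk.Trivial, QWalk.len], ?_, by simp, rfl, rfl, by simp⟩
      · exact List.isChain_cons_cons.mpr ⟨hxy, List.isChain_cons_cons.mpr ⟨hE,
          List.isChain_cons_cons.mpr ⟨hyx, List.isChain_singleton x⟩⟩⟩
      · intro j b hb
        match j with
        | 0 =>
          simp only [List.getElem?_cons_zero, Option.some_inj] at hb
          subst hb
          exact ⟨x, y, rfl, rfl, rfl, ⟨rfl, by simp [hne.symm]⟩, by simp [QWalk.Trivial, QWalk.len]⟩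
        | j + 1 => simp at hb
      · refine RNest.cons (RNest.single _) ⟨y, [x], [x], rfl, rfl, rfl, by simp [hne.symm], Or.inr ?_, rfl⟩
        intro v hv hvy
        simp at hv
        subst hv
        simp [hne]
  | cons z rest' ih =>
    intro x y hnd hc hcr
    have hxy : E x y := (List.isChain_cons_cons.mp hc).1
    have hyx : E y x := (List.isChain_cons_cons.mp hcr).1
    have hnd' : (y :: z :: rest').Nodup := hnd.of_cons
    have hxmem : x ∉ y :: z :: rest' := by
      simp only [List.nodup_cons] at hnd; exact hnd.1
    have hne : x ≠ y := fun h => hxmem (h ▸ List.mem_cons_self)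
    obtain ⟨h1, h2⟩ := ih y z hnd' (List.isChain_cons_cons.mp hc).2 (List.isChain_cons_cons.mp hcr).2
    have hchb : List.Chain' E [x, y, x] :=
      List.isChain_cons_cons.mpr ⟨hxy, List.isChain_cons_cons.mpr ⟨hyx, List.isChain_singleton x⟩⟩
    constructor
    · obtain ⟨bs', u, hlen, hidx, hrn, huv, hufst, hulast, humem⟩ := h1
      have hh : u.verts.head? = some y := by
        rw [List.head?_eq_head u.ne]; exact congrArg some hufst
      have hh2 : u.verts.getLast? = some y := by
        rw [List.getLast?_eq_getLast u.ne]; exact congrArg some hulast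
      set w : QWalk V E := ⟨x :: (u.verts ++ [x]), by simp,
        chain'_sandwich u.chain hh hh2 hxy hyx⟩ with hw
      refine ⟨⟨[x, y, x], by simp, hchb⟩ :: bs', w, by simp [hlen], ?_, ?_, ?_, rfl, ?_, ?_⟩
      · intro j b hb
        match j with
        | 0 =>
          simp only [List.getElem?_cons_zero, Option.some_inj] at hb
          subst hb
          exact ⟨x, y, rfl, rfl, rfl, ⟨rfl, by simp [hne.symm]⟩, by simp [QWalk.Trivial, QWalk.len]⟩
        | j + 1 =>
          rw [List.getElem?_cons_succ] at hb
          simpa only [List.getElem?_cons_succ] using hidx j b hb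
      · refine RNest.cons hrn ⟨y, [x], [x], hufst, hulast, rfl, by simp [hne.symm], Or.inr ?_, rfl⟩
        intro v hv hvy hvu
        simp only [List.mem_singleton] at hv
        exact hxmem (hv ▸ humem v hvu)
      · show x :: (u.verts ++ [x]) = _
        have hrt : (x :: y :: z :: rest').reverse.tail
            = (y :: z :: rest').reverse.tail ++ [x] := by
          rw [List.reverse_cons, List.tail_append_singleton_of_ne_nil (by simp)]
        rw [hrt, huv]
        simp only [List.cons_append, List.append_assoc]
      · apply last_eq
        show ((x :: u.verts) ++ [x]).getLast? = some x
        rw [List.getLast?_append]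
        rfl
      · intro v hv
        rw [show w.verts = x :: (u.verts ++ [x]) from rfl] at hv
        simp only [List.mem_cons, List.mem_append, List.mem_singleton, List.not_mem_nil,
          or_false] at hv
        rcases hv with rfl | hv | rfl
        · exact List.mem_cons_self
        · exact List.mem_cons_of_mem _ (humem v hv)
        · exact List.mem_cons_self
    · intro t ht hE
      rw [List.getLast?_cons_cons] at ht
      obtain ⟨bs', lp, u, hlen, hidx, hlp, hlpsc, hlpnt, hrn, huv, hufst, hulast, humem⟩ :=
        h2 t ht hE
      have hh : u.verts.head? = some y := by
        rw [List.head?_eq_head u.ne]; exact congrArg some hufst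
      have hh2 : u.verts.getLast? = some y := by
        rw [List.getLast?_eq_getLast u.ne]; exact congrArg some hulast
      set w : QWalk V E := ⟨x :: (u.verts ++ [x]), by simp,
        chain'_sandwich u.chain hh hh2 hxy hyx⟩ with hw
      refine ⟨⟨[x, y, x], by simp, hchb⟩ :: bs', lp, w, by simp [hlen], ?_, hlp, hlpsc, hlpnt,
        ?_, ?_, rfl, ?_, ?_⟩
      · intro j b hb
        match j with
        | 0 =>
          simp only [List.getElem?_cons_zero, Option.some_inj] at hb
          subst hb
          exact ⟨x, y, rfl, rfl, rfl, ⟨rfl, by simp [hne.symm]⟩, by simp [QWalk.Trivial, QWalk.len]⟩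
        | j + 1 =>
          rw [List.getElem?_cons_succ] at hb
          simpa only [List.getElem?_cons_succ] using hidx j b hb
      · show RNest ((⟨[x, y, x], by simp, hchb⟩ : QWalk V E) :: (bs' ++ [lp])) w
        refine RNest.cons hrn ⟨y, [x], [x], hufst, hulast, rfl, by simp [hne.symm], Or.inr ?_, rfl⟩
        intro v hv hvy hvu
        simp only [List.mem_singleton] at hv
        exact hxmem (hv ▸ humem v hvu)
      · show x :: (u.verts ++ [x]) = _
        have hrt : (x :: y :: z :: rest').reverse.tail
            = (y :: z :: rest').reverse.tail ++ [x] := by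
          rw [List.reverse_cons, List.tail_append_singleton_of_ne_nil (by simp)]
        rw [hrt, huv]
        simp only [List.cons_append, List.append_assoc]
      · apply last_eq
        show ((x :: u.verts) ++ [x]).getLast? = some x
        rw [List.getLast?_append]
        rfl
      · intro v hv
        rw [show w.verts = x :: (u.verts ++ [x]) from rfl] at hv
        simp only [List.mem_cons, List.mem_append, List.mem_singleton, List.not_mem_nil,
          or_false] at hv
        rcases hv with rfl | hv | rfl
        · exact List.mem_cons_self
        · exact List.mem_cons_of_mem _ (humem v hv)
        · exact List.mem_cons_self

end QWalkAux

/-- Simple paths yield chains of nested simple cycles: let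
`p = (ν₀ ν₁ ⋯ ν_ℓ)` be a simple path (`ℓ ≥ 1`) all of whose reverse edges also belong
to the quiver, and let `b_j = (ν_j ν_{j+1} ν_j)` be the corresponding back-track
simple cycles.  Then `b₀ ⊙ (b₁ ⊙ (⋯ ⊙ b_{ℓ-1}))` is defined and equals the closed
walk `(ν₀ ν₁ ⋯ ν_{ℓ-1} ν_ℓ ν_{ℓ-1} ⋯ ν₁ ν₀)`; if moreover there is a self-loop
`L = (ν_ℓ ν_ℓ)`, then `b₀ ⊙ (b₁ ⊙ (⋯ ⊙ (b_{ℓ-1} ⊙ L)))` is defined and equals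
`(ν₀ ν₁ ⋯ ν_{ℓ-1} ν_ℓ ν_ℓ ν_{ℓ-1} ⋯ ν₁ ν₀)`, a chain of `ℓ + 1` recursively nested
nontrivial simple cycles whose outermost cycle is based at `ν₀`. -/
theorem stmt14 {V : Type} [Fintype V] (E : V → V → Prop)
    (p : QWalk V E) (hp : p.IsSimplePath) (hl : 1 ≤ p.len)
    (hrev : p.verts.Chain' (fun x y => E y x)) :
    (∃ (bs : List (QWalk V E)) (w : QWalk V E),
        bs.length = p.len ∧
        (∀ (j : ℕ) (b : QWalk V E), bs[j]? = some b →
          ∃ x y : V, p.verts[j]? = some x ∧ p.verts[j + 1]? = some y ∧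
            b.verts = [x, y, x] ∧ b.IsSimpleCycle ∧ ¬ b.Trivial) ∧
        QWalk.RNest bs w ∧ w.verts = p.verts ++ p.verts.reverse.tail) ∧
    (E p.last p.last →
      ∃ (bs : List (QWalk V E)) (lp w : QWalk V E),
        bs.length = p.len ∧
        (∀ (j : ℕ) (b : QWalk V E), bs[j]? = some b →
          ∃ x y : V, p.verts[j]? = some x ∧ p.verts[j + 1]? = some y ∧
            b.verts = [x, y, x] ∧ b.IsSimpleCycle ∧ ¬ b.Trivial) ∧
        lp.verts = [p.last, p.last] ∧ lp.IsSimpleCycle ∧ ¬ lp.Trivial ∧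
        QWalk.RNest (bs ++ [lp]) w ∧
        w.verts = p.verts ++ p.last :: p.verts.reverse.tail) := by
  rcases hv : p.verts with - | ⟨x, - | ⟨y, rest⟩⟩
  · exact absurd hv p.ne
  · simp [QWalk.len, hv] at hl
  · have hnd : (x :: y :: rest).Nodup := hv ▸ hp
    have hc : (x :: y :: rest).Chain' E := hv ▸ p.chain
    have hcr : (x :: y :: rest).Chain' (fun a b => E b a) := hv ▸ hrev
    obtain ⟨h1, h2⟩ := QWalkAux.main_aux rest x y hnd hc hcr
    have hlen : p.len = rest.length + 1 := by simp [QWalk.len, hv]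
    constructor
    · obtain ⟨bs, w, hb1, hb2, hb3, hb4, -, -, -⟩ := h1
      exact ⟨bs, w, by rw [hlen, hb1], hb2, hb3, hb4⟩
    · intro hEE
      have hgl : (x :: y :: rest).getLast? = some p.last := by
        have h1 : p.verts.getLast? = some p.last := List.getLast?_eq_getLast p.ne
        rw [hv] at h1
        exact h1
      obtain ⟨bs, lp, w, hb1, hb2, hlp, hlpsc, hlpnt, hrn, hwv, -, -, -⟩ := h2 p.last hgl hEE
      exact ⟨bs, lp, w, by rw [hlen, hb1], hb2, hlp, hlpsc, hlpnt, hrn,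
        hwv⟩
end

section
/- Walk generating function of path graphs: for every k ≥ 1, in ℤ[[z]] one has Q_k · (Σ_{m≥0} N_m z^m) = Q_{k−1}, where N_m is the number of closed walks of length m from an end vertex of the path graph P_k to itself. -/
/-- The polynomials `Q_k` (viewed in `ℤ[[z]]`), defined by `Q₀ = Q₁ = 1` and
`Q_k = Q_{k-1} − z² · Q_{k-2}` for `k ≥ 2`. -/
noncomputable def Qpoly : ℕ → PowerSeries ℤ
  | 0 => 1
  | 1 => 1
  | k + 2 => Qpoly (k + 1) - PowerSeries.X ^ 2 * Qpoly k

/-- The adjacency matrix of the path graph `P_k` on vertices `1, …, k`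
(indices `0, …, k − 1`), with edges `{i, i+1}` for `1 ≤ i < k`. -/
def pathAdj (k : ℕ) : Matrix (Fin k) (Fin k) ℤ :=
  Matrix.of fun i j => if i.val + 1 = j.val ∨ j.val + 1 = i.val then 1 else 0

/-- The adjacency matrix of the cycle graph `C_n` on vertices `1, …, n`
(indices `0, …, n − 1`), with edges `{i, i+1}` for `1 ≤ i < n` and `{n, 1}`. -/
def cycleAdj (n : ℕ) : Matrix (Fin n) (Fin n) ℤ :=
  Matrix.of fun i j =>
    if i.val + 1 = j.val ∨ j.val + 1 = i.val ∨
        (i.val = n - 1 ∧ j.val = 0) ∨ (j.val = n - 1 ∧ i.val = 0)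
    then 1 else 0

open PowerSeries Matrix Finset

-- helper: sum of ite over Fin k picking l.val = c
lemma sum_ite_val {R : Type*} [AddCommMonoid R] {k : ℕ} (c : ℕ) (f : Fin k → R) :
    ∑ l : Fin k, (if l.val = c then f l else 0) =
      if h : c < k then f ⟨c, h⟩ else 0 := by
  split_ifs with h
  · rw [Finset.sum_eq_single (⟨c, h⟩ : Fin k)]
    · simp
    · intro b _ hb
      have : b.val ≠ c := fun hb' => hb (Fin.ext hb')
      simp [this]
    · simp
  · apply Finset.sum_eq_zero
    intro l _
    have : l.val ≠ c := fun hl => h (hl ▸ l.isLt)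
    simp [this]

noncomputable def Avar (k : ℕ) : Matrix (Fin k) (Fin k) (PowerSeries ℤ) :=
  (pathAdj k).map (PowerSeries.C (R := ℤ))

noncomputable def Mmat (k : ℕ) : Matrix (Fin k) (Fin k) (PowerSeries ℤ) :=
  1 - (PowerSeries.X : PowerSeries ℤ) • Avar k

noncomputable def Gvec (k : ℕ) (hk : 1 ≤ k) : Fin k → PowerSeries ℤ :=
  fun j => PowerSeries.mk fun m => ((pathAdj k ^ m) ⟨0, hk⟩ j : ℤ)

noncomputable def Hvec (k : ℕ) : Fin k → PowerSeries ℤ :=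
  fun j => PowerSeries.X ^ (j : ℕ) * Qpoly (k - 1 - j.val)

lemma pathAdj_symm (k : ℕ) (i j : Fin k) : pathAdj k i j = pathAdj k j i := by
  simp only [pathAdj, Matrix.of_apply, or_comm]

lemma avec_mulVec (k : ℕ) (hk : 1 ≤ k) (j : Fin k) :
    (Avar k).mulVec (Gvec k hk) j = PowerSeries.mk fun m =>
      ((pathAdj k ^ (m + 1)) ⟨0, hk⟩ j : ℤ) := by
  ext n
  simp only [Matrix.mulVec, dotProduct, Avar, Gvec, Matrix.map_apply, map_sum,
    PowerSeries.coeff_C_mul, PowerSeries.coeff_mk]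
  rw [pow_succ, Matrix.mul_apply]
  exact Finset.sum_congr rfl fun l _ => by rw [pathAdj_symm k j l, mul_comm]

lemma M_mulVec_G (k : ℕ) (hk : 1 ≤ k) :
    (Mmat k).mulVec (Gvec k hk) = Pi.single ⟨0, hk⟩ 1 := by
  funext j
  rw [Mmat, Matrix.sub_mulVec, Matrix.one_mulVec, Matrix.smul_mulVec]
  ext n
  rw [Pi.sub_apply, map_sub, Pi.smul_apply]
  cases n with
  | zero =>
    rw [smul_eq_mul]
    simp only [PowerSeries.coeff_zero_eq_constantCoeff, _root_.map_mul,
      PowerSeries.constantCoeff_X, zero_mul, sub_zero, Gvec, PowerSeries.coeff_mk]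
    by_cases hj : j = ⟨0, hk⟩
    · subst hj; simp [Pi.single_apply, pow_zero, Matrix.one_apply]
    · have h0 : ((pathAdj k ^ 0) ⟨0, hk⟩ j : ℤ) = 0 := by
        simp [Matrix.one_apply, Ne.symm hj]
      simp [Pi.single_apply, hj, h0, Matrix.one_apply_ne (Ne.symm hj)]
  | succ n =>
    rw [smul_eq_mul, PowerSeries.coeff_succ_X_mul, avec_mulVec]
    simp only [Gvec, PowerSeries.coeff_mk, sub_self]
    by_cases hj : j = ⟨0, hk⟩ <;> simp [Pi.single_apply, hj]

lemma ite_or_add {R : Type*} [AddCommMonoid R] (P Q : Prop) [Decidable P] [Decidable Q]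
    (h : ¬(P ∧ Q)) (x : R) :
    (if P ∨ Q then x else 0) = (if P then x else 0) + (if Q then x else 0) := by
  by_cases hP : P <;> by_cases hQ : Q <;> simp_all

lemma avec_mulVec_H (k : ℕ) (j : Fin k) :
    (Avar k).mulVec (Hvec k) j =
      (if h : j.val + 1 < k then Hvec k ⟨j.val + 1, h⟩ else 0) +
      (if h : 0 < j.val then Hvec k ⟨j.val - 1, lt_of_le_of_lt (Nat.pred_le _) j.isLt⟩
        else 0) := by
  simp only [Matrix.mulVec, dotProduct, Avar, pathAdj, Matrix.map_apply,
    Matrix.of_apply, apply_ite (PowerSeries.C (R := ℤ)), _root_.map_one, map_zero, ite_mul, one_mul,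
    zero_mul]
  have hsplit : ∀ l : Fin k,
      (if j.val + 1 = l.val ∨ l.val + 1 = j.val then Hvec k l else 0) =
        (if l.val = j.val + 1 then Hvec k l else 0) +
        (if l.val + 1 = j.val then Hvec k l else 0) := by
    intro l
    rw [ite_or_add _ _ (by omega)]
    congr 1
    simp [eq_comm]
  rw [Finset.sum_congr rfl fun l _ => hsplit l, Finset.sum_add_distrib]
  congr 1
  · rw [sum_ite_val]
  · rcases Nat.eq_zero_or_pos j.val with h0 | h0
    · rw [dif_neg (by omega)]
      apply Finset.sum_eq_zero
      intro l _
      rw [if_neg (by omega)]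
    · obtain ⟨i, hi⟩ : ∃ i, j.val = i + 1 := ⟨j.val - 1, by omega⟩
      have : ∀ l : Fin k, (if l.val + 1 = j.val then Hvec k l else 0) =
          (if l.val = i then Hvec k l else 0) := by
        intro l; exact if_congr (by omega) rfl rfl
      rw [Finset.sum_congr rfl fun l _ => this l, sum_ite_val,
        dif_pos (show i < k by omega), dif_pos h0]
      have hie : i = j.val - 1 := by omega
      subst hie
      rfl

lemma M_mulVec_H (k : ℕ) (hk : 1 ≤ k) :
    (Mmat k).mulVec (Hvec k) = Pi.single (M := fun _ : Fin k => PowerSeries ℤ) ⟨0, hk⟩ (Qpoly k) := by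
  funext j
  rcases j with ⟨jv, hj⟩
  rw [Mmat, Matrix.sub_mulVec, Matrix.one_mulVec, Matrix.smul_mulVec, Pi.sub_apply,
    Pi.smul_apply, smul_eq_mul, avec_mulVec_H]
  simp only [Fin.val_mk]
  by_cases h0 : jv = 0
  · subst h0
    have hsing : Pi.single (M := fun _ : Fin k => PowerSeries ℤ) ⟨0, hk⟩ (Qpoly k) ⟨0, hj⟩
        = Qpoly k := Pi.single_eq_same _ _
    rw [hsing, dif_neg (show ¬ (0:ℕ) < 0 by omega)]
    rcases Nat.lt_or_ge k 2 with hk2 | hk2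
    · have hk1 : k = 1 := by omega
      subst hk1
      rw [dif_neg (show ¬ 0 + 1 < 1 by omega)]
      simp [Hvec, Qpoly]
    · obtain ⟨s, rfl⟩ : ∃ s, k = s + 2 := ⟨k - 2, by omega⟩
      rw [dif_pos (show 0 + 1 < s + 2 by omega)]
      simp only [Hvec, Fin.val_mk]
      rw [show s + 2 - 1 - 0 = s + 1 from by omega, show s + 2 - 1 - (0 + 1) = s from by omega,
        show Qpoly (s + 2) = Qpoly (s + 1) - PowerSeries.X ^ 2 * Qpoly s from rfl]
      ring
  · rw [Pi.single_eq_of_ne (by simp [Fin.ext_iff, h0])]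
    obtain ⟨i, rfl⟩ : ∃ i, jv = i + 1 := ⟨jv - 1, by omega⟩
    by_cases htop : i + 1 = k - 1
    · obtain ⟨s, rfl⟩ : ∃ s, k = s + 2 := ⟨k - 2, by omega⟩
      have hi : s = i := by omega
      subst hi
      rw [dif_neg (show ¬ s + 1 + 1 < s + 2 by omega), dif_pos (show 0 < s + 1 by omega)]
      simp only [Hvec, Fin.val_mk]
      rw [show s + 2 - 1 - (s + 1) = 0 from by omega, show s + 1 - 1 = s from rfl,
        show s + 2 - 1 - s = 1 from by omega,
        show Qpoly 0 = 1 from rfl, show Qpoly 1 = 1 from rfl]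
      ring
    · obtain ⟨s, rfl⟩ : ∃ s, k = i + s + 3 := ⟨k - i - 3, by omega⟩
      rw [dif_pos (show i + 1 + 1 < i + s + 3 by omega), dif_pos (show 0 < i + 1 by omega)]
      simp only [Hvec, Fin.val_mk]
      rw [show i + s + 3 - 1 - (i + 1) = s + 1 from by omega,
        show i + s + 3 - 1 - (i + 1 + 1) = s from by omega,
        show i + 1 - 1 = i from rfl,
        show i + s + 3 - 1 - i = s + 2 from by omega,
        show Qpoly (s + 2) = Qpoly (s + 1) - PowerSeries.X ^ 2 * Qpoly s from rfl]
      ring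

lemma Mmat_isUnit (k : ℕ) : IsUnit (Mmat k) := by
  rw [Matrix.isUnit_iff_isUnit_det, PowerSeries.isUnit_iff_constantCoeff,
    RingHom.map_det ((PowerSeries.constantCoeff (R := ℤ))) (Mmat k), RingHom.mapMatrix_apply]
  have : (Mmat k).map ((PowerSeries.constantCoeff (R := ℤ))) = 1 := by
    ext i j
    simp only [Mmat, Matrix.map_apply, Matrix.sub_apply, Matrix.smul_apply, smul_eq_mul,
      map_sub, _root_.map_mul, PowerSeries.constantCoeff_X, zero_mul, sub_zero]
    by_cases hij : i = j <;> simp [Matrix.one_apply, hij]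
  rw [this, Matrix.det_one]
  exact isUnit_one


/-- Walk generating function of path graphs: for `k ≥ 1`,
`Q_k · (Σ_m N_m z^m) = Q_{k-1}` in `ℤ[[z]]`, where `N_m` is the number of closed
walks of length `m` from an end vertex of `P_k` to itself (the `(0,0)` entry of the
`m`-th power of the adjacency matrix). -/
theorem stmt16 (k : ℕ) (hk : 1 ≤ k) :
    Qpoly k * PowerSeries.mk (fun m => ((pathAdj k ^ m) ⟨0, hk⟩ ⟨0, hk⟩ : ℤ)) =
      Qpoly (k - 1) := by
  have hU := Mmat_isUnit k
  obtain ⟨B, hB⟩ := hU.exists_left_inv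
  have hmv : (Mmat k).mulVec (Qpoly k • Gvec k hk) = (Mmat k).mulVec (Hvec k) := by
    rw [Matrix.mulVec_smul, M_mulVec_G k hk, M_mulVec_H k hk]
    funext j
    by_cases hj : j = ⟨0, hk⟩ <;>
      simp [Pi.single_apply, hj]
  have key : Qpoly k • Gvec k hk = Hvec k := by
    have := congrArg B.mulVec hmv
    rwa [Matrix.mulVec_mulVec, Matrix.mulVec_mulVec, hB, Matrix.one_mulVec,
      Matrix.one_mulVec] at this
  have := congrFun key ⟨0, hk⟩
  rw [Pi.smul_apply, smul_eq_mul] at this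
  rw [show PowerSeries.mk (fun m => ((pathAdj k ^ m) ⟨0, hk⟩ ⟨0, hk⟩ : ℤ)) = Gvec k hk ⟨0, hk⟩
    from rfl, this]
  simp [Hvec]
end

section
/- Closed-walk generating function of cycle graphs: for every n ≥ 3 and any vertex α of the cycle graph C_n, in ℤ[[z]] one has (Q_{n−1} − 2z²·Q_{n−2} − 2zⁿ) · (Σ_{m≥0} N_m z^m) = Q_{n−1}, where N_m is the number of closed walks of length m from α to itself in C_n. -/
open PowerSeries

lemma Qpoly_rec (k : ℕ) : Qpoly (k + 2) = Qpoly (k + 1) - X ^ 2 * Qpoly k := rfl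

lemma fin_eq_add_one_iff {n : ℕ} [NeZero n] (hn : 3 ≤ n) (j k : Fin n) :
    j = k + 1 ↔ (k.val + 1 = j.val ∨ (k.val = n - 1 ∧ j.val = 0)) := by
  obtain ⟨m, rfl⟩ : ∃ m, n = m + 1 := ⟨n - 1, by omega⟩
  rw [Fin.ext_iff, Fin.val_add_one]
  have hj := j.isLt; have hk := k.isLt
  by_cases h : k = Fin.last m
  · have : k.val = m := by rw [h]; rfl
    simp [h]; omega
  · have : k.val ≠ m := fun hh => h (Fin.ext hh)
    simp [h]; omega

lemma cycleAdj_apply {n : ℕ} [NeZero n] (hn : 3 ≤ n) (j k : Fin n) :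
    cycleAdj n j k = (if j = k - 1 then (1 : ℤ) else 0) + (if j = k + 1 then 1 else 0) := by
  have h1 : (j = k - 1) ↔ (j.val + 1 = k.val ∨ (j.val = n - 1 ∧ k.val = 0)) := by
    rw [eq_sub_iff_add_eq, eq_comm, ← fin_eq_add_one_iff hn k j]
  have h2 : (j = k + 1) ↔ (k.val + 1 = j.val ∨ (k.val = n - 1 ∧ j.val = 0)) :=
    fin_eq_add_one_iff hn j k
  have hj := j.isLt; have hk := k.isLt
  simp only [cycleAdj, Matrix.of_apply, h1, h2]
  split_ifs <;> (try norm_num) <;> omega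

lemma pow_succ_entry {n : ℕ} [NeZero n] (hn : 3 ≤ n) (m : ℕ) (α k : Fin n) :
    (cycleAdj n ^ (m + 1)) α k
      = (cycleAdj n ^ m) α (k - 1) + (cycleAdj n ^ m) α (k + 1) := by
  rw [pow_succ, Matrix.mul_apply]
  simp only [cycleAdj_apply hn, mul_add, mul_ite, mul_one, mul_zero]
  rw [Finset.sum_add_distrib, Finset.sum_ite_eq' Finset.univ (k - 1),
    Finset.sum_ite_eq' Finset.univ (k + 1)]
  simp

lemma F_rec {n : ℕ} [NeZero n] (hn : 3 ≤ n) (α k : Fin n) :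
    (mk fun m => ((cycleAdj n ^ m) α k : ℤ))
      - X * (mk fun m => ((cycleAdj n ^ m) α (k - 1)))
      - X * (mk fun m => ((cycleAdj n ^ m) α (k + 1)))
      = if k = α then 1 else 0 := by
  ext m
  cases m with
  | zero =>
      simp only [map_sub, coeff_zero_X_mul, coeff_zero_eq_constantCoeff_apply,
        constantCoeff_mk, pow_zero, Matrix.one_apply, sub_zero]
      by_cases h : k = α
      · simp [h]
      · have h' : ¬(α = k) := fun hh => h hh.symm
        simp [h, h']
  | succ m =>
      simp only [map_sub, coeff_succ_X_mul, coeff_mk, pow_succ_entry hn m α k]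
      by_cases h : k = α <;> simp [h, PowerSeries.coeff_one] <;> try ring

noncomputable def wfun (n d : ℕ) : PowerSeries ℤ :=
  if d = 0 then Qpoly (n - 1)
  else X ^ d * Qpoly (n - 1 - d) + X ^ (n - d) * Qpoly (d - 1)

lemma wfun_zero (n : ℕ) : wfun n 0 = Qpoly (n - 1) := if_pos rfl

lemma wfun_pos (n : ℕ) {d : ℕ} (h : d ≠ 0) :
    wfun n d = X ^ d * Qpoly (n - 1 - d) + X ^ (n - d) * Qpoly (d - 1) := if_neg h

lemma wfun_rec {n : ℕ} (hn : 3 ≤ n) (d : ℕ) (hd : d < n) :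
    wfun n d - X * wfun n ((d + (n - 1)) % n) - X * wfun n ((d + 1) % n)
      = if d = 0 then
          Qpoly (n - 1) - 2 * X ^ 2 * Qpoly (n - 2) - 2 * X ^ n
        else 0 := by
  obtain ⟨m, rfl⟩ : ∃ m, n = m + 3 := ⟨n - 3, by omega⟩
  rcases Nat.lt_or_ge d 2 with h2 | h2
  · interval_cases d
    · -- d = 0
      have e1 : (0 + (m + 3 - 1)) % (m + 3) = m + 2 := by
        rw [show 0 + (m + 3 - 1) = m + 2 by omega]; exact Nat.mod_eq_of_lt (by omega)
      have e2 : (0 + 1) % (m + 3) = 1 := Nat.mod_eq_of_lt (by omega)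
      rw [e1, e2, if_pos rfl, wfun_zero, wfun_pos _ (by omega : (m+2:ℕ) ≠ 0),
        wfun_pos _ (one_ne_zero)]
      rw [show m + 3 - 1 - (m + 2) = 0 by omega, show m + 3 - (m + 2) = 1 by omega,
        show m + 2 - 1 = m + 1 by omega, show m + 3 - 1 - 1 = m + 1 by omega,
        show m + 3 - 1 = m + 2 by omega, show m + 3 - 2 = m + 1 by omega,
        show (1:ℕ) - 1 = 0 by omega]
      rw [show Qpoly 0 = 1 from rfl]; ring
    · -- d = 1
      have e1 : (1 + (m + 3 - 1)) % (m + 3) = 0 := by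
        rw [show 1 + (m + 3 - 1) = m + 3 by omega, Nat.mod_self]
      have e2 : (1 + 1) % (m + 3) = 2 := Nat.mod_eq_of_lt (by omega)
      rw [e1, e2, if_neg one_ne_zero, wfun_zero, wfun_pos _ (one_ne_zero),
        wfun_pos _ (by omega : (2:ℕ) ≠ 0)]
      rw [show m + 3 - 1 - 1 = m + 1 by omega, show m + 3 - 1 - 2 = m by omega,
        show m + 3 - 2 = m + 1 by omega, show m + 3 - 1 = m + 2 by omega,
        show (1:ℕ) - 1 = 0 by omega, show (2:ℕ) - 1 = 1 by omega]
      rw [show Qpoly 0 = 1 from rfl, show Qpoly 1 = 1 from rfl, Qpoly_rec m]; ring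
  · rcases Nat.lt_or_ge d (m + 2) with h3 | h3
    · -- 2 ≤ d ≤ n - 2 : generic case
      obtain ⟨b, rfl⟩ : ∃ b, d = b + 2 := ⟨d - 2, by omega⟩
      obtain ⟨c, hc⟩ : ∃ c, m + 3 = b + 2 + c + 2 := ⟨m - b - 1, by omega⟩
      have e1 : (b + 2 + (m + 3 - 1)) % (m + 3) = b + 1 := by
        rw [show b + 2 + (m + 3 - 1) = (b + 1) + (m + 3) by omega, Nat.add_mod_right]
        exact Nat.mod_eq_of_lt (by omega)
      have e2 : (b + 2 + 1) % (m + 3) = b + 3 := by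
        rw [show b + 2 + 1 = b + 3 from rfl]; exact Nat.mod_eq_of_lt (by omega)
      rw [e1, e2, if_neg (by omega : ¬(b + 2 = 0)), wfun_pos _ (by omega : b + 2 ≠ 0),
        wfun_pos _ (by omega : b + 1 ≠ 0), wfun_pos _ (by omega : b + 3 ≠ 0)]
      rw [show m + 3 - 1 - (b + 2) = c + 1 by omega, show m + 3 - (b + 2) = c + 2 by omega,
        show b + 2 - 1 = b + 1 by omega, show m + 3 - 1 - (b + 1) = c + 2 by omega,
        show m + 3 - (b + 1) = c + 3 by omega, show b + 1 - 1 = b by omega,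
        show m + 3 - 1 - (b + 3) = c by omega, show m + 3 - (b + 3) = c + 1 by omega,
        show b + 3 - 1 = b + 2 by omega]
      rw [Qpoly_rec b, Qpoly_rec c]; ring
    · -- d = n - 1 = m + 2
      have hd2 : d = m + 2 := by omega
      subst hd2
      have e1 : (m + 2 + (m + 3 - 1)) % (m + 3) = m + 1 := by
        rw [show m + 2 + (m + 3 - 1) = (m + 1) + (m + 3) by omega, Nat.add_mod_right]
        exact Nat.mod_eq_of_lt (by omega)
      have e2 : (m + 2 + 1) % (m + 3) = 0 := by
        rw [show m + 2 + 1 = m + 3 from rfl, Nat.mod_self]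
      rw [e1, e2, if_neg (by omega : ¬(m + 2 = 0)), wfun_zero,
        wfun_pos _ (by omega : m + 2 ≠ 0), wfun_pos _ (by omega : m + 1 ≠ 0)]
      rw [show m + 3 - 1 - (m + 2) = 0 by omega, show m + 3 - (m + 2) = 1 by omega,
        show m + 2 - 1 = m + 1 by omega, show m + 3 - 1 - (m + 1) = 1 by omega,
        show m + 3 - (m + 1) = 2 by omega, show m + 1 - 1 = m by omega,
        show m + 3 - 1 = m + 2 by omega]
      rw [show Qpoly 0 = 1 from rfl, show Qpoly 1 = 1 from rfl, Qpoly_rec m]; ring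

lemma w_rec {n : ℕ} [NeZero n] (hn : 3 ≤ n) (α j : Fin n) :
    wfun n ((j - α).val) - X * wfun n (((j - 1) - α).val) - X * wfun n (((j + 1) - α).val)
      = if j = α then Qpoly (n - 1) - 2 * X ^ 2 * Qpoly (n - 2) - 2 * X ^ n else 0 := by
  have v1 : (1 : Fin n).val = 1 := by
    rw [Fin.val_one']; exact Nat.mod_eq_of_lt (by omega)
  have h1 : ((j + 1) - α) = (j - α) + 1 := add_sub_right_comm j 1 α
  have h2 : ((j - 1) - α) = (j - α) - 1 := sub_right_comm j 1 α
  have hv1 : ((j - α) + 1).val = (((j - α).val) + 1) % n := by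
    rw [Fin.val_add, v1]
  have hv2 : ((j - α) - 1).val = (((j - α).val) + (n - 1)) % n := by
    rw [Fin.sub_def, v1, Nat.add_comm]
  have hiff : ((j - α).val = 0) ↔ (j = α) := by
    rw [show ((j - α).val = 0) ↔ (j - α = 0) from ⟨fun h => Fin.ext h, fun h => by rw [h]; rfl⟩,
      sub_eq_zero]
  rw [h1, h2, hv1, hv2, wfun_rec hn _ (Fin.is_lt _)]
  by_cases h : j = α
  · rw [if_pos (hiff.mpr h), if_pos h]
  · rw [if_neg (fun hh => h (hiff.mp hh)), if_neg h]


/-- Closed-walk generating function of cycle graphs: for `n ≥ 3` and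
any vertex `α` of `C_n`, `(Q_{n-1} − 2z²·Q_{n-2} − 2zⁿ) · (Σ_m N_m z^m) = Q_{n-1}` in
`ℤ[[z]]`, where `N_m` is the number of closed walks of length `m` from `α` to itself
(the `(α, α)` entry of the `m`-th power of the adjacency matrix). -/
theorem stmt17 (n : ℕ) (hn : 3 ≤ n) (α : Fin n) :
    (Qpoly (n - 1) - 2 * PowerSeries.X ^ 2 * Qpoly (n - 2) - 2 * PowerSeries.X ^ n) *
        PowerSeries.mk (fun m => ((cycleAdj n ^ m) α α : ℤ)) =
      Qpoly (n - 1) := by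
  haveI : NeZero n := ⟨by omega⟩
  set P : PowerSeries ℤ := Qpoly (n - 1) - 2 * X ^ 2 * Qpoly (n - 2) - 2 * X ^ n with hP
  set F : Fin n → PowerSeries ℤ := fun k => mk fun m => ((cycleAdj n ^ m) α k : ℤ) with hFdef
  set w : Fin n → PowerSeries ℤ := fun j => wfun n ((j - α).val) with hwdef
  have hF : ∀ k : Fin n, F k - X * F (k - 1) - X * F (k + 1) = if k = α then 1 else 0 :=
    fun k => F_rec hn α k
  have hw : ∀ j : Fin n, w j - X * w (j - 1) - X * w (j + 1) = if j = α then P else 0 :=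
    fun j => w_rec hn α j
  -- the two sums
  have hsum1 : ∑ j : Fin n, w j * (F j - X * F (j - 1) - X * F (j + 1)) = w α := by
    have h : ∀ j ∈ Finset.univ, w j * (F j - X * F (j - 1) - X * F (j + 1))
        = if j = α then w j else 0 := by
      intro j _; rw [hF j]; split_ifs <;> simp
    rw [Finset.sum_congr rfl h, Finset.sum_ite_eq' Finset.univ α,
      if_pos (Finset.mem_univ α)]
  have hsum2 : ∑ j : Fin n, (w j - X * w (j - 1) - X * w (j + 1)) * F j = P * F α := by
    have h : ∀ j ∈ Finset.univ, (w j - X * w (j - 1) - X * w (j + 1)) * F j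
        = if j = α then P * F j else 0 := by
      intro j _; rw [hw j]; split_ifs <;> simp
    rw [Finset.sum_congr rfl h, Finset.sum_ite_eq' Finset.univ α,
      if_pos (Finset.mem_univ α)]
  have hre1 : ∑ j : Fin n, w (j + 1) * F j = ∑ j : Fin n, w j * F (j - 1) := by
    apply Fintype.sum_equiv (Equiv.addRight (1 : Fin n))
    intro j
    simp only [Equiv.coe_addRight, add_sub_cancel_right]
  have hre2 : ∑ j : Fin n, w (j - 1) * F j = ∑ j : Fin n, w j * F (j + 1) := by
    apply Fintype.sum_equiv (Equiv.subRight (1 : Fin n))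
    intro j
    simp only [Equiv.subRight_apply, sub_add_cancel]
  have key : ∑ j : Fin n, w j * (F j - X * F (j - 1) - X * F (j + 1))
      = ∑ j : Fin n, (w j - X * w (j - 1) - X * w (j + 1)) * F j := by
    have e1 : ∑ j : Fin n, w j * (F j - X * F (j - 1) - X * F (j + 1))
        = ∑ j : Fin n, w j * F j - X * ∑ j : Fin n, w j * F (j - 1)
          - X * ∑ j : Fin n, w j * F (j + 1) := by
      rw [Finset.mul_sum, Finset.mul_sum, ← Finset.sum_sub_distrib, ← Finset.sum_sub_distrib]
      exact Finset.sum_congr rfl fun j _ => by ring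
    have e2 : ∑ j : Fin n, (w j - X * w (j - 1) - X * w (j + 1)) * F j
        = ∑ j : Fin n, w j * F j - X * ∑ j : Fin n, w (j - 1) * F j
          - X * ∑ j : Fin n, w (j + 1) * F j := by
      rw [Finset.mul_sum, Finset.mul_sum, ← Finset.sum_sub_distrib, ← Finset.sum_sub_distrib]
      exact Finset.sum_congr rfl fun j _ => by ring
    rw [e1, e2, ← hre1, ← hre2]; ring
  have hwα : w α = Qpoly (n - 1) := by
    show wfun n ((α - α).val) = Qpoly (n - 1)
    rw [sub_self, Fin.val_zero, wfun_zero]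
  have : P * F α = Qpoly (n - 1) := by rw [← hsum2, ← key, hsum1, hwα]
  exact this
end
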